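/- arXiv:1907.05342 — 4 statements merged into one kernel-verified Lean document; each statement's English description precedes it below -/
import Mathlib

section
/- Let x₀ ∈ ℝ, r > 0, p > 0, λ ≥ 1 and A ≥ 0. Let u : ℝ → [0,∞) be integrable with u^p locally integrable, and suppose that for every s ∈ (r/2, r) one has ∫_{x₀−s}^{x₀+s} u^p dx ≤ A · ( ∫_{x₀−s}^{x₀+s} u dx )^{λ}. Let φ : ℝ → [0,1] be symmetric around x₀, nonincreasing in |x−x₀|, with φ = 1 on (x₀−r/2, x₀+r/2) and φ = 0 outside (x₀−r, x₀+r). Then for every S ∈ (r/2, r), ∫_{x₀−S}^{x₀+S} φ u^p dx ≤ A · ( ∫_{x₀−S}^{x₀+S} u dx )^{λ−1} · ∫_ℝ φ u dx. -/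
open MeasureTheory Real Set
open scoped ENNReal

private lemma sandwich_ae (a b : ℝ) (P : Set ℝ)
    (h1 : Ioo a b ⊆ P) (h2 : P ⊆ Icc a b) (hab : a ≤ b) :
    P =ᵐ[volume] Ioo a b := by
  rw [MeasureTheory.ae_eq_set]
  refine ⟨measure_mono_null (fun x hx => ?_) (?_ : volume (Icc a b \ Ioo a b) = 0), ?_⟩
  · exact ⟨h2 hx.1, hx.2⟩
  · rw [Icc_diff_Ioo_same hab]
    exact (Set.toFinite _).measure_zero _
  · rw [Set.diff_eq_empty.2 h1]
    simp

private lemma layer_swap {μ : Measure ℝ} [SFinite μ] (φ : ℝ → ℝ) (hφ : Measurable φ)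
    (hφ1 : ∀ x, φ x ≤ 1) (v : ℝ → ℝ≥0∞) (hv : AEMeasurable v μ) :
    ∫⁻ x, ENNReal.ofReal (φ x) * v x ∂μ
      = ∫⁻ t in Ioo (0:ℝ) 1, ∫⁻ x in {x | t < φ x}, v x ∂μ := by
  have key : ∀ x, ENNReal.ofReal (φ x) * v x
      = ∫⁻ t in Ioo (0:ℝ) 1, (Iio (φ x)).indicator (fun _ => v x) t := by
    intro x
    rw [lintegral_indicator measurableSet_Iio, setLIntegral_const,
      Measure.restrict_apply measurableSet_Iio]
    have hset : Iio (φ x) ∩ Ioo (0:ℝ) 1 = Ioo 0 (φ x) := by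
      ext t
      simp only [mem_inter_iff, mem_Iio, mem_Ioo]
      constructor
      · rintro ⟨h1, h2, _⟩; exact ⟨h2, h1⟩
      · rintro ⟨h1, h2⟩; exact ⟨h2, h1, lt_of_lt_of_le h2 (hφ1 x)⟩
    rw [hset, Real.volume_Ioo, sub_zero, mul_comm]
  calc ∫⁻ x, ENNReal.ofReal (φ x) * v x ∂μ
      = ∫⁻ x, (∫⁻ t in Ioo (0:ℝ) 1, (Iio (φ x)).indicator (fun _ => v x) t) ∂μ := by
        exact lintegral_congr fun x => key x
    _ = ∫⁻ t in Ioo (0:ℝ) 1, ∫⁻ x, (Iio (φ x)).indicator (fun _ => v x) t ∂μ := by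
        refine lintegral_lintegral_swap (μ := μ) (ν := volume.restrict (Ioo (0:ℝ) 1))
          (f := fun x t => (Iio (φ x)).indicator (fun _ => v x) t) ?_
        have heq : (Function.uncurry fun (x : ℝ) (t : ℝ) =>
            (Iio (φ x)).indicator (fun _ => v x) t)
            = {q : ℝ × ℝ | q.2 < φ q.1}.indicator (fun q => v q.1) := by
          ext q
          simp [Function.uncurry, Set.indicator_apply]
        rw [heq]
        exact (hv.comp_quasiMeasurePreserving Measure.quasiMeasurePreserving_fst).indicator
          (measurableSet_lt measurable_snd (hφ.comp measurable_fst))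
    _ = ∫⁻ t in Ioo (0:ℝ) 1, ∫⁻ x in {x | t < φ x}, v x ∂μ := by
        refine setLIntegral_congr_fun measurableSet_Ioo (
          fun t _ => ?_)
        have h1 : ∀ x, (Iio (φ x)).indicator (fun _ => v x) t
            = {x | t < φ x}.indicator v x := by
          intro x
          simp [Set.indicator_apply]
        simp_rw [h1]
        exact lintegral_indicator (hφ measurableSet_Ioi) v

/-- **Layer-cake (cutoff-level) averaging step**: if for every `s ∈ (r/2, r)` the
unweighted interpolation inequality `∫_{B_s} u^p ≤ A (∫_{B_s} u)^λ` holds, and `φ` is a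
radially symmetric, radially nonincreasing cutoff with `φ = 1` on `B_{r/2}(x₀)` and
`φ = 0` outside `B_r(x₀)`, then for every `S ∈ (r/2, r)` one has
`∫_{B_S} φ u^p ≤ A (∫_{B_S} u)^{λ-1} ∫_ℝ φ u`. -/
theorem layer_cake_averaging
    (x₀ r p lam A : ℝ) (hr : 0 < r) (hp : 0 < p) (hlam : 1 ≤ lam) (hA : 0 ≤ A)
    (u : ℝ → ℝ) (hu_nonneg : ∀ x, 0 ≤ u x) (hu_int : Integrable u)
    (hup_loc : LocallyIntegrable (fun x => u x ^ p))
    (hyp : ∀ s ∈ Ioo (r / 2) r,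
      (∫ x in Ioo (x₀ - s) (x₀ + s), u x ^ p)
        ≤ A * (∫ x in Ioo (x₀ - s) (x₀ + s), u x) ^ lam)
    (φ : ℝ → ℝ) (hφ_range : ∀ x, φ x ∈ Icc (0 : ℝ) 1)
    (hφ_symm : ∀ y : ℝ, φ (x₀ + y) = φ (x₀ - y))
    (hφ_mono : ∀ y z : ℝ, |y - x₀| ≤ |z - x₀| → φ z ≤ φ y)
    (hφ_one : ∀ x ∈ Ioo (x₀ - r / 2) (x₀ + r / 2), φ x = 1)
    (hφ_zero : ∀ x ∉ Ioo (x₀ - r) (x₀ + r), φ x = 0) :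
    ∀ S ∈ Ioo (r / 2) r,
      (∫ x in Ioo (x₀ - S) (x₀ + S), φ x * u x ^ p)
        ≤ A * (∫ x in Ioo (x₀ - S) (x₀ + S), u x) ^ (lam - 1) * ∫ x, φ x * u x := by
  intro S hS
  obtain ⟨hS1, hS2⟩ := hS
  have hr2 : (0:ℝ) < r / 2 := by linarith
  have hφ0 : ∀ x, 0 ≤ φ x := fun x => (hφ_range x).1
  have hφ1 : ∀ x, φ x ≤ 1 := fun x => (hφ_range x).2
  -- radial representation
  have hrad : ∀ x, φ x = φ (x₀ + |x - x₀|) := by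
    intro x
    rcases le_total x₀ x with h | h
    · rw [abs_of_nonneg (by linarith)]
      congr 1; ring
    · rw [abs_of_nonpos (by linarith), hφ_symm]
      congr 1; ring
  -- superlevel sets are order-connected, hence φ is measurable
  have hlevel : ∀ t : ℝ, OrdConnected {x | t < φ x} := by
    intro t
    constructor
    rintro x hx z hz y hy
    rcases le_total x₀ y with h | h
    · refine lt_of_lt_of_le hz (hφ_mono y z ?_)
      rw [abs_of_nonneg (by linarith)]
      have h2 : y - x₀ ≤ z - x₀ := by linarith [hy.2]
      exact h2.trans (le_abs_self _)
    · refine lt_of_lt_of_le hx (hφ_mono y x ?_)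
      rw [abs_of_nonpos (by linarith)]
      have h2 : -(y - x₀) ≤ x₀ - x := by linarith [hy.1]
      rw [abs_sub_comm]
      exact h2.trans (le_abs_self _)
  have hφ_meas : Measurable φ := measurable_of_Ioi (fun t => (hlevel t).measurableSet)
  have hEmeas : ∀ t : ℝ, MeasurableSet {x | t < φ x} := fun t => hφ_meas measurableSet_Ioi
  -- abbreviations
  set G : ℝ → ℝ := fun m => ∫ x in Ioo (x₀ - m) (x₀ + m), u x with hGdef0
  set F : ℝ → ℝ := fun m => ∫ x in Ioo (x₀ - m) (x₀ + m), u x ^ p with hFdef0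
  have hGdef : ∀ m, (∫ x in Ioo (x₀ - m) (x₀ + m), u x) = G m := fun _ => rfl
  have hFdef : ∀ m, (∫ x in Ioo (x₀ - m) (x₀ + m), u x ^ p) = F m := fun _ => rfl
  rw [hGdef]
  set C : ℝ := A * G S ^ (lam - 1) with hCdef
  set B : Set ℝ := Ioo (x₀ - S) (x₀ + S) with hBdef
  -- integrability facts
  have hupR : IntegrableOn (fun x => u x ^ p) (Icc (x₀ - r) (x₀ + r)) :=
    hup_loc.integrableOn_isCompact isCompact_Icc
  have hupm : ∀ m, m ≤ r → IntegrableOn (fun x => u x ^ p) (Ioo (x₀ - m) (x₀ + m)) := by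
    intro m hm
    exact hupR.mono_set (fun x hx => ⟨by linarith [hx.1], by linarith [hx.2]⟩)
  have hGnn : ∀ m, 0 ≤ G m := fun m =>
    setIntegral_nonneg measurableSet_Ioo (fun x _ => hu_nonneg x)
  have hC : 0 ≤ C := mul_nonneg hA (Real.rpow_nonneg (hGnn S) _)
  have hGmono : ∀ a b, a ≤ b → G a ≤ G b := by
    intro a b hab
    exact setIntegral_mono_set hu_int.integrableOn
      (Filter.Eventually.of_forall hu_nonneg)
      (HasSubset.Subset.eventuallyLE (Ioo_subset_Ioo (by linarith) (by linarith)))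
  have hFmono : ∀ a b, a ≤ b → b ≤ r → F a ≤ F b := by
    intro a b hab hbr
    exact setIntegral_mono_set (hupm b hbr)
      (Filter.Eventually.of_forall fun x => Real.rpow_nonneg (hu_nonneg x) p)
      (HasSubset.Subset.eventuallyLE (Ioo_subset_Ioo (by linarith) (by linarith)))
  -- the main radius inequality, first for m > r/2
  have hstep : ∀ m, r / 2 < m → m ≤ S → F m ≤ C * G m := by
    intro m hm1 hm2
    have h1 := hyp m ⟨hm1, lt_of_le_of_lt hm2 hS2⟩
    rw [hGdef, hFdef] at h1
    have h2 : G m ^ lam ≤ G S ^ (lam - 1) * G m := by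
      rcases eq_or_lt_of_le (hGnn m) with h | h
      · rw [← h, Real.zero_rpow (by linarith : lam ≠ 0)]
        simp
      · have hexp : G m ^ lam = G m ^ (lam - 1) * G m := by
          rw [← Real.rpow_add_one (ne_of_gt h) (lam - 1), sub_add_cancel]
        rw [hexp]
        exact mul_le_mul_of_nonneg_right
          (Real.rpow_le_rpow (hGnn m) (hGmono m S hm2) (by linarith)) (hGnn m)
    calc F m ≤ A * G m ^ lam := h1
      _ ≤ A * (G S ^ (lam - 1) * G m) := mul_le_mul_of_nonneg_left h2 hA
      _ = C * G m := by rw [hCdef]; ring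
  -- continuity of G from the right at r/2
  have hPc : Continuous (fun y => ∫ x in (x₀ - r)..y, u x) :=
    intervalIntegral.continuous_primitive (fun a b => hu_int.intervalIntegrable) _
  have hGrep : ∀ m : ℝ, 0 ≤ m →
      G m = (∫ x in (x₀ - r)..(x₀ + m), u x) - ∫ x in (x₀ - r)..(x₀ - m), u x := by
    intro m hm
    rw [intervalIntegral.integral_interval_sub_left hu_int.intervalIntegrable
      hu_int.intervalIntegrable,
      intervalIntegral.integral_of_le (by linarith : x₀ - m ≤ x₀ + m),
      integral_Ioc_eq_integral_Ioo, hGdef]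
  have hGt : Filter.Tendsto G (nhdsWithin (r / 2) (Ioi (r / 2))) (nhds (G (r / 2))) := by
    have hc : Filter.Tendsto
        (fun m => (∫ x in (x₀ - r)..(x₀ + m), u x) - ∫ x in (x₀ - r)..(x₀ - m), u x)
        (nhdsWithin (r / 2) (Ioi (r / 2)))
        (nhds ((∫ x in (x₀ - r)..(x₀ + r / 2), u x) - ∫ x in (x₀ - r)..(x₀ - r / 2), u x)) := by
      apply Filter.Tendsto.mono_left _ nhdsWithin_le_nhds
      exact ((hPc.comp (continuous_const.add continuous_id)).sub
        (hPc.comp (continuous_const.sub continuous_id))).tendsto (r / 2)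
    rw [hGrep (r / 2) (by linarith)]
    apply hc.congr'
    filter_upwards [self_mem_nhdsWithin] with m hm
    exact (hGrep m (by simp only [mem_Ioi] at hm; linarith)).symm
  -- key inequality for all m ∈ [r/2, S]
  have hkey : ∀ m, r / 2 ≤ m → m ≤ S → F m ≤ C * G m := by
    intro m hm1 hm2
    rcases eq_or_lt_of_le hm1 with h | h
    · have hev : ∀ᶠ m' in nhdsWithin (r / 2) (Ioi (r / 2)), F m ≤ C * G m' := by
        filter_upwards [Ioo_mem_nhdsGT_of_mem ⟨le_refl (r / 2), hS1⟩] with m' hm'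
        exact le_trans (by rw [← h]; exact hFmono (r / 2) m' hm'.1.le (by linarith [hm'.2]))
          (hstep m' hm'.1 hm'.2.le)
      have hlim : Filter.Tendsto (fun m' => C * G m')
          (nhdsWithin (r / 2) (Ioi (r / 2))) (nhds (C * G (r / 2))) := hGt.const_mul C
      have hle := ge_of_tendsto hlim hev
      rw [← h] at hle ⊢
      exact hle
    · exact hstep m h hm2
  -- the per-level real inequality
  have hreal : ∀ t, 0 < t → t < 1 →
      (∫ x in {x | t < φ x} ∩ B, u x ^ p) ≤ C * ∫ x in {x | t < φ x}, u x := by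
    intro t ht0 ht1
    set Y := {y : ℝ | 0 ≤ y ∧ t < φ (x₀ + y)} with hYdef
    have h0Y : (0:ℝ) ∈ Y := by
      refine ⟨le_refl 0, ?_⟩
      rw [add_zero, hφ_one x₀ ⟨by linarith, by linarith⟩]
      exact ht1
    have hYr : ∀ y ∈ Y, y < r := by
      intro y hy
      by_contra hc
      push_neg at hc
      have h0 : φ (x₀ + y) = 0 := hφ_zero _ (by
        intro hmem
        have := hmem.2
        linarith)
      have := hy.2
      rw [h0] at this
      linarith
    have hbdd : BddAbove Y := ⟨r, fun y hy => (hYr y hy).le⟩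
    set s := sSup Y with hsdef
    have hs0 : 0 ≤ s := le_csSup hbdd h0Y
    have hsr : s ≤ r := csSup_le ⟨0, h0Y⟩ (fun y hy => (hYr y hy).le)
    have hs2 : r / 2 ≤ s := by
      by_contra hc
      push_neg at hc
      have hyY : (s + r / 2) / 2 ∈ Y := by
        refine ⟨by linarith, ?_⟩
        rw [hφ_one (x₀ + (s + r / 2) / 2) ⟨by linarith, by linarith⟩]
        exact ht1
      have := le_csSup hbdd hyY
      linarith
    have hEIcc : {x | t < φ x} ⊆ Icc (x₀ - s) (x₀ + s) := by
      intro x hx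
      have hmem : |x - x₀| ∈ Y := ⟨abs_nonneg _, by rw [← hrad x]; exact hx⟩
      have h1 := le_csSup hbdd hmem
      have h2 := abs_le.1 h1
      exact ⟨by linarith [h2.1], by linarith [h2.2]⟩
    have hsubE : Ioo (x₀ - s) (x₀ + s) ⊆ {x | t < φ x} := by
      intro x hx
      have habs : |x - x₀| < s := abs_lt.2 ⟨by linarith [hx.1], by linarith [hx.2]⟩
      obtain ⟨y, hyY, hlt⟩ := exists_lt_of_lt_csSup ⟨0, h0Y⟩ habs
      have hmono : φ (x₀ + y) ≤ φ x := hφ_mono x (x₀ + y) (by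
        rw [show x₀ + y - x₀ = y by ring, abs_of_nonneg hyY.1]
        exact hlt.le)
      exact lt_of_lt_of_le hyY.2 hmono
    set m := min S s with hmdef
    have hmr2 : r / 2 ≤ m := le_min hS1.le hs2
    have hmS : m ≤ S := min_le_left _ _
    have hms : m ≤ s := min_le_right _ _
    have hsub1 : Ioo (x₀ - m) (x₀ + m) ⊆ {x | t < φ x} ∩ B := by
      intro x hx
      exact ⟨hsubE ⟨by linarith [hx.1], by linarith [hx.2]⟩,
        ⟨by linarith [hx.1], by linarith [hx.2]⟩⟩
    have hsub2 : {x | t < φ x} ∩ B ⊆ Icc (x₀ - m) (x₀ + m) := by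
      rintro x ⟨hxE, hxB⟩
      have h1 := hEIcc hxE
      constructor
      · rcases min_cases S s with ⟨he, _⟩ | ⟨he, _⟩
        · rw [hmdef, he]; linarith [hxB.1]
        · rw [hmdef, he]; linarith [h1.1]
      · rcases min_cases S s with ⟨he, _⟩ | ⟨he, _⟩
        · rw [hmdef, he]; linarith [hxB.2]
        · rw [hmdef, he]; linarith [h1.2]
    have hae : ({x | t < φ x} ∩ B : Set ℝ) =ᵐ[volume] Ioo (x₀ - m) (x₀ + m) :=
      sandwich_ae _ _ _ hsub1 hsub2 (by linarith)
    have hlast : (∫ x in Ioo (x₀ - m) (x₀ + m), u x) ≤ ∫ x in {x | t < φ x}, u x :=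
      setIntegral_mono_set hu_int.integrableOn
        (Filter.Eventually.of_forall hu_nonneg)
        (HasSubset.Subset.eventuallyLE (fun x hx =>
          hsubE ⟨by linarith [hx.1], by linarith [hx.2]⟩))
    calc (∫ x in {x | t < φ x} ∩ B, u x ^ p)
        = ∫ x in Ioo (x₀ - m) (x₀ + m), u x ^ p := setIntegral_congr_set hae
      _ = F m := hFdef m
      _ ≤ C * G m := hkey m hmr2 hmS
      _ ≤ C * ∫ x in {x | t < φ x}, u x := by
          refine mul_le_mul_of_nonneg_left ?_ hC
          rw [← hGdef m]
          exact hlast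
  -- integrability of the weighted functions
  have hupS : IntegrableOn (fun x => u x ^ p) B := hupm S hS2.le
  have hup_asm : AEStronglyMeasurable (fun x => u x ^ p) volume := hup_loc.aestronglyMeasurable
  have hint1 : IntegrableOn (fun x => φ x * u x ^ p) B := by
    apply Integrable.mono' hupS ((hφ_meas.aestronglyMeasurable.mul hup_asm).restrict)
    refine Filter.Eventually.of_forall fun x => ?_
    show ‖φ x * u x ^ p‖ ≤ u x ^ p
    rw [Real.norm_eq_abs, abs_mul, abs_of_nonneg (hφ0 x),
      abs_of_nonneg (Real.rpow_nonneg (hu_nonneg x) p)]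
    exact mul_le_of_le_one_left (Real.rpow_nonneg (hu_nonneg x) p) (hφ1 x)
  have hint2 : Integrable (fun x => φ x * u x) := by
    apply Integrable.mono' hu_int (hφ_meas.aestronglyMeasurable.mul hu_int.aestronglyMeasurable)
    refine Filter.Eventually.of_forall fun x => ?_
    show ‖φ x * u x‖ ≤ u x
    rw [Real.norm_eq_abs, abs_mul, abs_of_nonneg (hφ0 x), abs_of_nonneg (hu_nonneg x)]
    exact mul_le_of_le_one_left (hu_nonneg x) (hφ1 x)
  have hnn2 : 0 ≤ ∫ x, φ x * u x := integral_nonneg fun x => mul_nonneg (hφ0 x) (hu_nonneg x)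
  -- move to ℝ≥0∞
  rw [← ENNReal.ofReal_le_ofReal_iff (mul_nonneg hC hnn2)]
  have hwE : AEMeasurable (fun x => ENNReal.ofReal (u x)) volume :=
    ENNReal.measurable_ofReal.comp_aemeasurable hu_int.aemeasurable
  have hwpE : AEMeasurable (fun x => ENNReal.ofReal (u x ^ p)) (volume.restrict B) :=
    ENNReal.measurable_ofReal.comp_aemeasurable hup_asm.aemeasurable.restrict
  have e1 : ENNReal.ofReal (∫ x in B, φ x * u x ^ p)
      = ∫⁻ t in Ioo (0:ℝ) 1, ∫⁻ x in {x | t < φ x} ∩ B, ENNReal.ofReal (u x ^ p) := by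
    rw [ofReal_integral_eq_lintegral_ofReal hint1 (Filter.Eventually.of_forall
      fun x => mul_nonneg (hφ0 x) (Real.rpow_nonneg (hu_nonneg x) p))]
    have hmul : ∀ x, ENNReal.ofReal (φ x * u x ^ p)
        = ENNReal.ofReal (φ x) * ENNReal.ofReal (u x ^ p) :=
      fun x => ENNReal.ofReal_mul (hφ0 x)
    simp_rw [hmul]
    rw [layer_swap φ hφ_meas hφ1 _ hwpE]
    refine setLIntegral_congr_fun measurableSet_Ioo (fun t _ => ?_)
    rw [Measure.restrict_restrict (hEmeas t)]
  have e2 : ENNReal.ofReal (∫ x, φ x * u x)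
      = ∫⁻ t in Ioo (0:ℝ) 1, ∫⁻ x in {x | t < φ x}, ENNReal.ofReal (u x) := by
    rw [ofReal_integral_eq_lintegral_ofReal hint2 (Filter.Eventually.of_forall
      fun x => mul_nonneg (hφ0 x) (hu_nonneg x))]
    have hmul : ∀ x, ENNReal.ofReal (φ x * u x)
        = ENNReal.ofReal (φ x) * ENNReal.ofReal (u x) :=
      fun x => ENNReal.ofReal_mul (hφ0 x)
    simp_rw [hmul]
    rw [layer_swap φ hφ_meas hφ1 _ hwE]
  calc ENNReal.ofReal (∫ x in B, φ x * u x ^ p)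
      = ∫⁻ t in Ioo (0:ℝ) 1, ∫⁻ x in {x | t < φ x} ∩ B, ENNReal.ofReal (u x ^ p) := e1
    _ ≤ ∫⁻ t in Ioo (0:ℝ) 1,
          ENNReal.ofReal C * ∫⁻ x in {x | t < φ x}, ENNReal.ofReal (u x) := by
        apply lintegral_mono_ae
        refine (ae_restrict_iff' measurableSet_Ioo).2 (Filter.Eventually.of_forall
          fun t ht => ?_)
        have hEt : IntegrableOn (fun x => u x ^ p) ({x | t < φ x} ∩ B) :=
          hupS.mono_set inter_subset_right
        rw [← ofReal_integral_eq_lintegral_ofReal hEt (Filter.Eventually.of_forall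
            fun x => Real.rpow_nonneg (hu_nonneg x) p),
          ← ofReal_integral_eq_lintegral_ofReal hu_int.integrableOn
            (Filter.Eventually.of_forall hu_nonneg),
          ← ENNReal.ofReal_mul hC]
        exact ENNReal.ofReal_le_ofReal (hreal t ht.1 ht.2)
    _ = ENNReal.ofReal C * ∫⁻ t in Ioo (0:ℝ) 1,
          ∫⁻ x in {x | t < φ x}, ENNReal.ofReal (u x) :=
        lintegral_const_mul' _ _ ENNReal.ofReal_ne_top
    _ = ENNReal.ofReal C * ENNReal.ofReal (∫ x, φ x * u x) := by rw [e2]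
    _ = ENNReal.ofReal (C * ∫ x, φ x * u x) := (ENNReal.ofReal_mul hC).symm
end

section
/- Let d ∈ {1,2,3}, n ∈ (1,2), β ∈ (0,1/9) and C₀ > 0. Then there exist constants α ∈ (0, 2−n), ε ∈ (0,1), δ > 0 and c > 0, depending only on d, n, β, C₀, with the following property. Write D := dα + dn + 4. Let κ, R, T > 0 satisfy κ T^{1/n} ≤ c, write r_k := R·2^{−k}, and let M, S : {1,2,3,…} → [0,∞) be sequences such that M(1) ≤ ε T^{−1/n} r₁^{4/n+d}, S(1) ≤ ε^δ T^{β−(α+1)/n} r₁^{4(α+1)/n+d}, and for every k ≥ 1: S(k+1) ≤ C₀ T^{β−(1+β)dα/D} S(k)^{dα/D} M(k)^{(4α+dn+4)/D} + C₀ r_{k+1}^{−dα} T^{β} M(k)^{α+1} + C₀ r_{k+1}^{−4} T^{4(1+β)/D} S(k)^{(dα+dn)/D} M(k)^{4(α+n+1)/D} + C₀ r_{k+1}^{−4−d(α+n)} T^{β+1} M(k)^{α+n+1}, and M(k+1) ≤ κ r_k^{4/n+d} + C₀ r_{k+1}^{−1} T^{(αd+1−β(dn+3))/D} S(k)^{(dn+3)/D}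 M(k)^{(αd+n+1−3α)/D} + C₀ r_{k+1}^{−1−d(n−3α)/4} T^{(1−3β)/4} S(k)^{3/4} M(k)^{(n+1−3α)/4} + C₀ r_{k+1}^{−4} T^{(αd+4−βdn)/D} S(k)^{dn/D} M(k)^{(αd+4n+4)/D} + C₀ r_{k+1}^{−4−dn} T · M(k)^{n+1}. Then for every k ≥ 1 one has M(k) ≤ ε T^{−1/n} r_k^{4/n+d} and S(k) ≤ ε^δ T^{β−(α+1)/n} r_k^{4(α+1)/n+d}. -/
open Real

set_option maxHeartbeats 4000000

/-- The dyadic radii `r_k = R · 2^{-k}`. -/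
noncomputable def rk (R : ℝ) (k : ℕ) : ℝ := R * (2 : ℝ) ^ (-(k : ℝ))

private lemma master_term (C T x S M ε K σ μ aS bS aM bM t e tt ee : ℝ)
    (hC : 0 ≤ C) (hT : 0 < T) (hx : 0 < x) (hε : 0 < ε)
    (hS0 : 0 ≤ S) (hM0 : 0 ≤ M) (hσ : 0 ≤ σ) (hμ : 0 ≤ μ)
    (hS : S ≤ ε * T ^ aS * (2 * x) ^ bS)
    (hM : M ≤ ε * T ^ aM * (2 * x) ^ bM)
    (ht : t + aS * σ + aM * μ = tt) (he : e + bS * σ + bM * μ = ee)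
    (hc : C * ε ^ (σ + μ) * 2 ^ (bS * σ + bM * μ) ≤ K) :
    C * T ^ t * x ^ e * S ^ σ * M ^ μ ≤ K * T ^ tt * x ^ ee := by
  have h2x : (0:ℝ) ≤ 2 * x := by positivity
  have hSb : S ^ σ ≤ ε ^ σ * T ^ (aS * σ) * (2 ^ (bS * σ) * x ^ (bS * σ)) := by
    have h1 : S ^ σ ≤ (ε * T ^ aS * (2 * x) ^ bS) ^ σ :=
      Real.rpow_le_rpow hS0 hS hσ
    have h2 : (ε * T ^ aS * (2 * x) ^ bS) ^ σ
        = ε ^ σ * T ^ (aS * σ) * (2 ^ (bS * σ) * x ^ (bS * σ)) := by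
      rw [Real.mul_rpow (by positivity) (by positivity),
          Real.mul_rpow hε.le (by positivity),
          ← Real.rpow_mul hT.le, ← Real.rpow_mul h2x,
          Real.mul_rpow (by norm_num : (0:ℝ) ≤ 2) hx.le]
    linarith [h2 ▸ h1]
  have hMb : M ^ μ ≤ ε ^ μ * T ^ (aM * μ) * (2 ^ (bM * μ) * x ^ (bM * μ)) := by
    have h1 : M ^ μ ≤ (ε * T ^ aM * (2 * x) ^ bM) ^ μ :=
      Real.rpow_le_rpow hM0 hM hμ
    have h2 : (ε * T ^ aM * (2 * x) ^ bM) ^ μ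
        = ε ^ μ * T ^ (aM * μ) * (2 ^ (bM * μ) * x ^ (bM * μ)) := by
      rw [Real.mul_rpow (by positivity) (by positivity),
          Real.mul_rpow hε.le (by positivity),
          ← Real.rpow_mul hT.le, ← Real.rpow_mul h2x,
          Real.mul_rpow (by norm_num : (0:ℝ) ≤ 2) hx.le]
    linarith [h2 ▸ h1]
  have step1 : C * T ^ t * x ^ e * S ^ σ * M ^ μ ≤
      C * T ^ t * x ^ e * (ε ^ σ * T ^ (aS * σ) * (2 ^ (bS * σ) * x ^ (bS * σ)))
        * (ε ^ μ * T ^ (aM * μ) * (2 ^ (bM * μ) * x ^ (bM * μ))) := by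
    have hA0 : (0:ℝ) ≤ C * T ^ t * x ^ e := by positivity
    exact mul_le_mul (mul_le_mul_of_nonneg_left hSb hA0) hMb
      (Real.rpow_nonneg hM0 μ) (by positivity)
  have step2 : C * T ^ t * x ^ e * (ε ^ σ * T ^ (aS * σ) * (2 ^ (bS * σ) * x ^ (bS * σ)))
        * (ε ^ μ * T ^ (aM * μ) * (2 ^ (bM * μ) * x ^ (bM * μ)))
      = (C * ε ^ (σ + μ) * 2 ^ (bS * σ + bM * μ)) * (T ^ tt * x ^ ee) := by
    rw [← ht, ← he, Real.rpow_add hε, Real.rpow_add two_pos,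
        Real.rpow_add hT, Real.rpow_add hT, Real.rpow_add hx, Real.rpow_add hx]
    ring
  calc C * T ^ t * x ^ e * S ^ σ * M ^ μ ≤ _ := step1
    _ = (C * ε ^ (σ + μ) * 2 ^ (bS * σ + bM * μ)) * (T ^ tt * x ^ ee) := step2
    _ ≤ K * (T ^ tt * x ^ ee) := mul_le_mul_of_nonneg_right hc (by positivity)
    _ = K * T ^ tt * x ^ ee := (mul_assoc _ _ _).symm

private lemma eps_step (C₀ ε mm s p : ℝ) (hC : 0 < C₀) (hε : 0 < ε) (hε1 : ε ≤ 1)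
    (hkey : C₀ * 2 ^ (36:ℝ) * ε ^ mm ≤ 1 / 5)
    (hg : mm + 1 ≤ s) (hp : p ≤ 36) :
    C₀ * ε ^ s * 2 ^ p ≤ 1 / 5 * ε := by
  have h2 : ε ^ s ≤ ε ^ (mm + 1) := Real.rpow_le_rpow_of_exponent_ge hε hε1 hg
  have h1 : ε ^ (mm + 1) = ε ^ mm * ε := by rw [Real.rpow_add hε, Real.rpow_one]
  have h3 : (2:ℝ) ^ p ≤ 2 ^ (36:ℝ) := Real.rpow_le_rpow_of_exponent_le one_le_two hp
  calc C₀ * ε ^ s * 2 ^ p ≤ C₀ * (ε ^ mm * ε) * 2 ^ (36:ℝ) := by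
        apply mul_le_mul _ h3 (by positivity) (by positivity)
        exact mul_le_mul_of_nonneg_left (h2.trans h1.le) hC.le
    _ = (C₀ * 2 ^ (36:ℝ) * ε ^ mm) * ε := by ring
    _ ≤ 1 / 5 * ε := mul_le_mul_of_nonneg_right hkey hε.le

private lemma p_bound (bS bM σ μ : ℝ) (h1 : 0 ≤ σ) (h2 : σ ≤ 1) (h3 : 0 ≤ μ) (h4 : μ ≤ 4)
    (h5 : 0 ≤ bS) (h6 : bS ≤ 8) (h7 : 0 ≤ bM) (h8 : bM ≤ 7) :
    bS * σ + bM * μ ≤ 36 := by nlinarith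

private lemma term_bound (C₀ T x Sk Mk E mm σ μ aS bS aM bM t e tt ee : ℝ)
    (hC : 0 < C₀) (hT : 0 < T) (hx : 0 < x) (hE : 0 < E) (hE1 : E ≤ 1)
    (hS0 : 0 ≤ Sk) (hM0 : 0 ≤ Mk)
    (hσ : 0 ≤ σ) (hσ1 : σ ≤ 1) (hμ : 0 ≤ μ) (hμ4 : μ ≤ 4)
    (hbS0 : 0 ≤ bS) (hbS8 : bS ≤ 8) (hbM0 : 0 ≤ bM) (hbM7 : bM ≤ 7)
    (hkey : C₀ * 2 ^ (36:ℝ) * E ^ mm ≤ 1 / 5)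
    (hg : mm + 1 ≤ σ + μ)
    (hS : Sk ≤ E * T ^ aS * (2 * x) ^ bS) (hM : Mk ≤ E * T ^ aM * (2 * x) ^ bM)
    (ht : t + aS * σ + aM * μ = tt) (he : e + bS * σ + bM * μ = ee) :
    C₀ * T ^ t * x ^ e * Sk ^ σ * Mk ^ μ ≤ 1 / 5 * E * (T ^ tt * x ^ ee) := by
  have hc : C₀ * E ^ (σ + μ) * 2 ^ (bS * σ + bM * μ) ≤ 1 / 5 * E :=
    eps_step C₀ E mm (σ + μ) _ hC hE hE1 hkey hg
      (p_bound bS bM σ μ hσ hσ1 hμ hμ4 hbS0 hbS8 hbM0 hbM7)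
  have h := master_term C₀ T x Sk Mk E (1 / 5 * E) σ μ aS bS aM bM t e tt ee
    hC.le hT hx hE hS0 hM0 hσ hμ hS hM ht he hc
  calc C₀ * T ^ t * x ^ e * Sk ^ σ * Mk ^ μ ≤ 1 / 5 * E * T ^ tt * x ^ ee := h
    _ = 1 / 5 * E * (T ^ tt * x ^ ee) := mul_assoc _ _ _
/-- **Two-variable Stampacchia-type induction (strong slippage `n ∈ (1,2)`)**:
down-propagation of the degeneracy of the local mass `M(k)` and of the
time-weighted local `α`-entropy `S(k)` of solutions of the thin-film equation,
from the recursive localized mass and entropy estimates.  Here `D = dα + dn + 4`. -/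
theorem down_propagation_strong_slippage
    (d : ℕ) (hd : d = 1 ∨ d = 2 ∨ d = 3)
    (n β C₀ : ℝ) (hn1 : 1 < n) (hn2 : n < 2)
    (hβ1 : 0 < β) (hβ2 : β < 1 / 9) (hC₀ : 0 < C₀) :
    ∃ α ε δ c : ℝ, 0 < α ∧ α < 2 - n ∧ 0 < ε ∧ ε < 1 ∧ 0 < δ ∧ 0 < c ∧
      ∀ (κ R T : ℝ) (M S : ℕ → ℝ),
        0 < κ → 0 < R → 0 < T → κ * T ^ (1 / n) ≤ c →
        (∀ k, 0 ≤ M k) → (∀ k, 0 ≤ S k) →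
        M 1 ≤ ε * T ^ (-(1 / n)) * rk R 1 ^ (4 / n + (d : ℝ)) →
        S 1 ≤ ε ^ δ * T ^ (β - (α + 1) / n) * rk R 1 ^ (4 * (α + 1) / n + (d : ℝ)) →
        (∀ k : ℕ, 1 ≤ k →
          S (k + 1) ≤
            C₀ * T ^ (β - (1 + β) * ((d : ℝ) * α) / ((d : ℝ) * α + (d : ℝ) * n + 4))
              * S k ^ ((d : ℝ) * α / ((d : ℝ) * α + (d : ℝ) * n + 4))
              * M k ^ ((4 * α + (d : ℝ) * n + 4) / ((d : ℝ) * α + (d : ℝ) * n + 4))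
            + C₀ * rk R (k + 1) ^ (-((d : ℝ) * α)) * T ^ β * M k ^ (α + 1)
            + C₀ * rk R (k + 1) ^ (-(4 : ℝ))
              * T ^ (4 * (1 + β) / ((d : ℝ) * α + (d : ℝ) * n + 4))
              * S k ^ (((d : ℝ) * α + (d : ℝ) * n) / ((d : ℝ) * α + (d : ℝ) * n + 4))
              * M k ^ (4 * (α + n + 1) / ((d : ℝ) * α + (d : ℝ) * n + 4))
            + C₀ * rk R (k + 1) ^ (-(4 : ℝ) - (d : ℝ) * (α + n))
              * T ^ (β + 1) * M k ^ (α + n + 1)) →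
        (∀ k : ℕ, 1 ≤ k →
          M (k + 1) ≤ κ * rk R k ^ (4 / n + (d : ℝ))
            + C₀ * rk R (k + 1) ^ (-(1 : ℝ))
              * T ^ ((α * (d : ℝ) + 1 - β * ((d : ℝ) * n + 3)) / ((d : ℝ) * α + (d : ℝ) * n + 4))
              * S k ^ (((d : ℝ) * n + 3) / ((d : ℝ) * α + (d : ℝ) * n + 4))
              * M k ^ ((α * (d : ℝ) + n + 1 - 3 * α) / ((d : ℝ) * α + (d : ℝ) * n + 4))
            + C₀ * rk R (k + 1) ^ (-(1 : ℝ) - (d : ℝ) * (n - 3 * α) / 4)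
              * T ^ ((1 - 3 * β) / 4) * S k ^ ((3 : ℝ) / 4) * M k ^ ((n + 1 - 3 * α) / 4)
            + C₀ * rk R (k + 1) ^ (-(4 : ℝ))
              * T ^ ((α * (d : ℝ) + 4 - β * (d : ℝ) * n) / ((d : ℝ) * α + (d : ℝ) * n + 4))
              * S k ^ ((d : ℝ) * n / ((d : ℝ) * α + (d : ℝ) * n + 4))
              * M k ^ ((α * (d : ℝ) + 4 * n + 4) / ((d : ℝ) * α + (d : ℝ) * n + 4))
            + C₀ * rk R (k + 1) ^ (-(4 : ℝ) - (d : ℝ) * n) * T * M k ^ (n + 1)) →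
        ∀ k : ℕ, 1 ≤ k →
          M k ≤ ε * T ^ (-(1 / n)) * rk R k ^ (4 / n + (d : ℝ)) ∧
          S k ≤ ε ^ δ * T ^ (β - (α + 1) / n) * rk R k ^ (4 * (α + 1) / n + (d : ℝ)) := by
  have hdd1 : (1:ℝ) ≤ (d:ℝ) := by rcases hd with rfl | rfl | rfl <;> norm_num
  have hdd3 : ((d:ℝ)) ≤ 3 := by rcases hd with rfl | rfl | rfl <;> norm_num
  have hn0 : (0:ℝ) < n := by linarith
  obtain ⟨A, hAdef⟩ : ∃ A : ℝ, A = min ((2 - n) / 2) (1 / 4 : ℝ) := ⟨_, rfl⟩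
  have hA0 : 0 < A := hAdef ▸ lt_min (by linarith) (by norm_num)
  have hA4 : A ≤ 1 / 4 := hAdef ▸ min_le_right _ _
  have hA2n : A < 2 - n := hAdef ▸ (min_le_left ((2-n)/2) (1/4:ℝ)).trans_lt (by linarith)
  have h3A : 3 * A < n := by linarith
  have hd0 : (0:ℝ) < (d:ℝ) := by linarith
  have hdA0 : 0 < (d:ℝ) * A := mul_pos hd0 hA0
  have hdn0 : 0 < (d:ℝ) * n := mul_pos hd0 hn0
  have hDD0 : (0:ℝ) < (d:ℝ) * A + (d:ℝ) * n + 4 := by linarith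
  have hDDne : ((d:ℝ) * A + (d:ℝ) * n + 4) ≠ 0 := hDD0.ne'
  have hnne : n ≠ 0 := hn0.ne'
  have hDD4 : (4:ℝ) ≤ (d:ℝ) * A + (d:ℝ) * n + 4 := by linarith
  have hdAA : A ≤ (d:ℝ) * A := le_mul_of_one_le_left hA0.le hdd1
  have hdnn : n ≤ (d:ℝ) * n := le_mul_of_one_le_left hn0.le hdd1
  have hdA34 : (d:ℝ) * A ≤ 3 / 4 := by
    calc (d:ℝ) * A ≤ 3 * (1/4) := mul_le_mul hdd3 hA4 hA0.le (by norm_num)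
      _ = 3 / 4 := by norm_num
  have hdn6 : (d:ℝ) * n ≤ 6 := by
    calc (d:ℝ) * n ≤ 3 * 2 := mul_le_mul hdd3 hn2.le hn0.le (by norm_num)
      _ = 6 := by norm_num
  -- exponent abbreviation facts (stage 2): σ/μ bounds, sums, homogeneity identities
  -- bS / bM bounds
  have hbS0 : (0:ℝ) ≤ 4 * (A + 1) / n + (d:ℝ) := by positivity
  have hbS8 : 4 * (A + 1) / n + (d:ℝ) ≤ 8 := by
    have h45 : 4 * (A + 1) / n ≤ 5 := by
      rw [div_le_iff₀ hn0]; linarith only [hA4, hn1]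
    linarith only [h45, hdd3]
  have hbM0 : (0:ℝ) ≤ 4 / n + (d:ℝ) := by positivity
  have hbM7 : 4 / n + (d:ℝ) ≤ 7 := by
    have h44 : 4 / n ≤ 4 := by rw [div_le_iff₀ hn0]; linarith only [hn1]
    linarith only [h44, hdd3]
  -- term S1
  have hσ0s1 : (0:ℝ) ≤ (d:ℝ) * A / ((d:ℝ) * A + (d:ℝ) * n + 4) := (div_pos hdA0 hDD0).le
  have hσ1s1 : (d:ℝ) * A / ((d:ℝ) * A + (d:ℝ) * n + 4) ≤ 1 := by
    rw [div_le_one hDD0]; linarith only [hdn0]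
  have hμ0s1 : (0:ℝ) ≤ (4 * A + (d:ℝ) * n + 4) / ((d:ℝ) * A + (d:ℝ) * n + 4) :=
    div_nonneg (by linarith only [hA0, hdn0]) hDD0.le
  have hμ4s1 : (4 * A + (d:ℝ) * n + 4) / ((d:ℝ) * A + (d:ℝ) * n + 4) ≤ 4 := by
    rw [div_le_iff₀ hDD0]; linarith only [hdAA, hdn0, hA0, hdA0]
  have hsum1 : (d:ℝ) * A / ((d:ℝ) * A + (d:ℝ) * n + 4)
      + (4 * A + (d:ℝ) * n + 4) / ((d:ℝ) * A + (d:ℝ) * n + 4)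
      = 1 + 4 * A / ((d:ℝ) * A + (d:ℝ) * n + 4) := by
    clear * - hnne hDDne; generalize hD : (d:ℝ) * A + (d:ℝ) * n + 4 = D at *; field_simp; subst hD; ring
  have hts1 : (β - (1 + β) * ((d:ℝ) * A) / ((d:ℝ) * A + (d:ℝ) * n + 4))
      + (β - (A + 1) / n) * ((d:ℝ) * A / ((d:ℝ) * A + (d:ℝ) * n + 4))
      + (-(1/n)) * ((4 * A + (d:ℝ) * n + 4) / ((d:ℝ) * A + (d:ℝ) * n + 4))
      = β - (A + 1) / n := by
    clear * - hnne hDDne; generalize hD : (d:ℝ) * A + (d:ℝ) * n + 4 = D at *; field_simp; subst hD; ring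
  have hes1 : (0:ℝ) + (4 * (A + 1) / n + (d:ℝ)) * ((d:ℝ) * A / ((d:ℝ) * A + (d:ℝ) * n + 4))
      + (4 / n + (d:ℝ)) * ((4 * A + (d:ℝ) * n + 4) / ((d:ℝ) * A + (d:ℝ) * n + 4))
      = 4 * (A + 1) / n + (d:ℝ) := by
    clear * - hnne hDDne; generalize hD : (d:ℝ) * A + (d:ℝ) * n + 4 = D at *; field_simp; subst hD; ring
  -- term S2
  have hts2 : β + (β - (A + 1) / n) * 0 + (-(1/n)) * (A + 1) = β - (A + 1) / n := by
    clear * - hnne hDDne; field_simp; try ring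
  have hes2 : (-((d:ℝ) * A)) + (4 * (A + 1) / n + (d:ℝ)) * 0 + (4 / n + (d:ℝ)) * (A + 1)
      = 4 * (A + 1) / n + (d:ℝ) := by
    clear * - hnne hDDne; field_simp; try ring
  -- term S3
  have hσ0s3 : (0:ℝ) ≤ ((d:ℝ) * A + (d:ℝ) * n) / ((d:ℝ) * A + (d:ℝ) * n + 4) :=
    div_nonneg (by linarith only [hdA0, hdn0]) hDD0.le
  have hσ1s3 : ((d:ℝ) * A + (d:ℝ) * n) / ((d:ℝ) * A + (d:ℝ) * n + 4) ≤ 1 := by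
    rw [div_le_one hDD0]; linarith only []
  have hμ0s3 : (0:ℝ) ≤ 4 * (A + n + 1) / ((d:ℝ) * A + (d:ℝ) * n + 4) :=
    div_nonneg (by linarith only [hA0, hn0]) hDD0.le
  have hμ4s3 : 4 * (A + n + 1) / ((d:ℝ) * A + (d:ℝ) * n + 4) ≤ 4 := by
    rw [div_le_iff₀ hDD0]; linarith only [hdAA, hdnn]
  have hsum3 : ((d:ℝ) * A + (d:ℝ) * n) / ((d:ℝ) * A + (d:ℝ) * n + 4)
      + 4 * (A + n + 1) / ((d:ℝ) * A + (d:ℝ) * n + 4)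
      = 1 + (4 * A + 4 * n) / ((d:ℝ) * A + (d:ℝ) * n + 4) := by
    clear * - hnne hDDne; generalize hD : (d:ℝ) * A + (d:ℝ) * n + 4 = D at *; field_simp; subst hD; ring
  have hts3 : 4 * (1 + β) / ((d:ℝ) * A + (d:ℝ) * n + 4)
      + (β - (A + 1) / n) * (((d:ℝ) * A + (d:ℝ) * n) / ((d:ℝ) * A + (d:ℝ) * n + 4))
      + (-(1/n)) * (4 * (A + n + 1) / ((d:ℝ) * A + (d:ℝ) * n + 4))
      = β - (A + 1) / n := by
    clear * - hnne hDDne; generalize hD : (d:ℝ) * A + (d:ℝ) * n + 4 = D at *; field_simp; subst hD; ring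
  have hes3 : (-(4:ℝ)) + (4 * (A + 1) / n + (d:ℝ)) * (((d:ℝ) * A + (d:ℝ) * n) / ((d:ℝ) * A + (d:ℝ) * n + 4))
      + (4 / n + (d:ℝ)) * (4 * (A + n + 1) / ((d:ℝ) * A + (d:ℝ) * n + 4))
      = 4 * (A + 1) / n + (d:ℝ) := by
    clear * - hnne hDDne; generalize hD : (d:ℝ) * A + (d:ℝ) * n + 4 = D at *; field_simp; subst hD; ring
  -- term S4
  have hts4 : (β + 1) + (β - (A + 1) / n) * 0 + (-(1/n)) * (A + n + 1) = β - (A + 1) / n := by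
    clear * - hnne hDDne; field_simp; try ring
  have hes4 : (-(4:ℝ) - (d:ℝ) * (A + n)) + (4 * (A + 1) / n + (d:ℝ)) * 0
      + (4 / n + (d:ℝ)) * (A + n + 1) = 4 * (A + 1) / n + (d:ℝ) := by
    clear * - hnne hDDne; field_simp; try ring
  -- term M2
  have hσ0m2 : (0:ℝ) ≤ ((d:ℝ) * n + 3) / ((d:ℝ) * A + (d:ℝ) * n + 4) :=
    div_nonneg (by linarith only [hdn0]) hDD0.le
  have hσ1m2 : ((d:ℝ) * n + 3) / ((d:ℝ) * A + (d:ℝ) * n + 4) ≤ 1 := by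
    rw [div_le_one hDD0]; linarith only [hdA0]
  have hμ0m2 : (0:ℝ) ≤ (A * (d:ℝ) + n + 1 - 3 * A) / ((d:ℝ) * A + (d:ℝ) * n + 4) :=
    div_nonneg (by linarith only [hdAA, h3A, hA0]) hDD0.le
  have hμ4m2 : (A * (d:ℝ) + n + 1 - 3 * A) / ((d:ℝ) * A + (d:ℝ) * n + 4) ≤ 4 := by
    rw [div_le_iff₀ hDD0]; linarith only [hdA34, hn2, hA0, hDD4]
  have hsum2 : ((d:ℝ) * n + 3) / ((d:ℝ) * A + (d:ℝ) * n + 4)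
      + (A * (d:ℝ) + n + 1 - 3 * A) / ((d:ℝ) * A + (d:ℝ) * n + 4)
      = 1 + (n - 3 * A) / ((d:ℝ) * A + (d:ℝ) * n + 4) := by
    clear * - hnne hDDne; generalize hD : (d:ℝ) * A + (d:ℝ) * n + 4 = D at *; field_simp; subst hD; ring
  have htm2 : (A * (d:ℝ) + 1 - β * ((d:ℝ) * n + 3)) / ((d:ℝ) * A + (d:ℝ) * n + 4)
      + (β - (A + 1) / n) * (((d:ℝ) * n + 3) / ((d:ℝ) * A + (d:ℝ) * n + 4))
      + (-(1/n)) * ((A * (d:ℝ) + n + 1 - 3 * A) / ((d:ℝ) * A + (d:ℝ) * n + 4))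
      = -(1/n) := by
    clear * - hnne hDDne; generalize hD : (d:ℝ) * A + (d:ℝ) * n + 4 = D at *; field_simp; subst hD; ring
  have hem2 : (-(1:ℝ)) + (4 * (A + 1) / n + (d:ℝ)) * (((d:ℝ) * n + 3) / ((d:ℝ) * A + (d:ℝ) * n + 4))
      + (4 / n + (d:ℝ)) * ((A * (d:ℝ) + n + 1 - 3 * A) / ((d:ℝ) * A + (d:ℝ) * n + 4))
      = 4 / n + (d:ℝ) := by
    clear * - hnne hDDne; generalize hD : (d:ℝ) * A + (d:ℝ) * n + 4 = D at *; field_simp; subst hD; ring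
  -- term M3
  have hμ0m3 : (0:ℝ) ≤ (n + 1 - 3 * A) / 4 := by
    apply div_nonneg _ (by norm_num); linarith only [h3A]
  have hμ4m3 : (n + 1 - 3 * A) / 4 ≤ 4 := by
    rw [div_le_iff₀ (by norm_num : (0:ℝ) < 4)]; linarith only [hn2, hA0]
  have htm3 : (1 - 3 * β) / 4 + (β - (A + 1) / n) * ((3:ℝ)/4)
      + (-(1/n)) * ((n + 1 - 3 * A) / 4) = -(1/n) := by
    clear * - hnne hDDne; field_simp; try ring
  have hem3 : (-(1:ℝ) - (d:ℝ) * (n - 3 * A) / 4) + (4 * (A + 1) / n + (d:ℝ)) * ((3:ℝ)/4)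
      + (4 / n + (d:ℝ)) * ((n + 1 - 3 * A) / 4) = 4 / n + (d:ℝ) := by
    clear * - hnne hDDne; field_simp; try ring
  -- term M4
  have hσ0m4 : (0:ℝ) ≤ (d:ℝ) * n / ((d:ℝ) * A + (d:ℝ) * n + 4) := (div_pos hdn0 hDD0).le
  have hσ1m4 : (d:ℝ) * n / ((d:ℝ) * A + (d:ℝ) * n + 4) ≤ 1 := by
    rw [div_le_one hDD0]; linarith only [hdA0]
  have hμ0m4 : (0:ℝ) ≤ (A * (d:ℝ) + 4 * n + 4) / ((d:ℝ) * A + (d:ℝ) * n + 4) :=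
    div_nonneg (by linarith only [hdA0, hn0]) hDD0.le
  have hμ4m4 : (A * (d:ℝ) + 4 * n + 4) / ((d:ℝ) * A + (d:ℝ) * n + 4) ≤ 4 := by
    rw [div_le_iff₀ hDD0]; linarith only [hdA34, hn2, hDD4]
  have hsum4 : (d:ℝ) * n / ((d:ℝ) * A + (d:ℝ) * n + 4)
      + (A * (d:ℝ) + 4 * n + 4) / ((d:ℝ) * A + (d:ℝ) * n + 4)
      = 1 + 4 * n / ((d:ℝ) * A + (d:ℝ) * n + 4) := by
    clear * - hnne hDDne; generalize hD : (d:ℝ) * A + (d:ℝ) * n + 4 = D at *; field_simp; subst hD; ring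
  have htm4 : (A * (d:ℝ) + 4 - β * (d:ℝ) * n) / ((d:ℝ) * A + (d:ℝ) * n + 4)
      + (β - (A + 1) / n) * ((d:ℝ) * n / ((d:ℝ) * A + (d:ℝ) * n + 4))
      + (-(1/n)) * ((A * (d:ℝ) + 4 * n + 4) / ((d:ℝ) * A + (d:ℝ) * n + 4))
      = -(1/n) := by
    clear * - hnne hDDne; generalize hD : (d:ℝ) * A + (d:ℝ) * n + 4 = D at *; field_simp; subst hD; ring
  have hem4 : (-(4:ℝ)) + (4 * (A + 1) / n + (d:ℝ)) * ((d:ℝ) * n / ((d:ℝ) * A + (d:ℝ) * n + 4))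
      + (4 / n + (d:ℝ)) * ((A * (d:ℝ) + 4 * n + 4) / ((d:ℝ) * A + (d:ℝ) * n + 4))
      = 4 / n + (d:ℝ) := by
    clear * - hnne hDDne; generalize hD : (d:ℝ) * A + (d:ℝ) * n + 4 = D at *; field_simp; subst hD; ring
  -- term M5
  have htm5 : (1:ℝ) + (β - (A + 1) / n) * 0 + (-(1/n)) * (n + 1) = -(1/n) := by
    clear * - hnne hDDne; field_simp; try ring
  have hem5 : (-(4:ℝ) - (d:ℝ) * n) + (4 * (A + 1) / n + (d:ℝ)) * 0
      + (4 / n + (d:ℝ)) * (n + 1) = 4 / n + (d:ℝ) := by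
    clear * - hnne hDDne; field_simp; try ring
  -- stage 3: mm, E, c and hg facts
  obtain ⟨mm, hmmdef⟩ : ∃ mm : ℝ, mm = min (4 * A / ((d:ℝ) * A + (d:ℝ) * n + 4))
    ((n - 3 * A) / ((d:ℝ) * A + (d:ℝ) * n + 4)) := ⟨_, rfl⟩
  have hmm0 : 0 < mm := hmmdef ▸
    lt_min (div_pos (by linarith) hDD0) (div_pos (by linarith) hDD0)
  have hm1 : mm ≤ 4 * A / ((d:ℝ) * A + (d:ℝ) * n + 4) := hmmdef ▸ min_le_left _ _
  have hm2 : mm ≤ (n - 3 * A) / ((d:ℝ) * A + (d:ℝ) * n + 4) := hmmdef ▸ min_le_right _ _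
  have hmA : mm ≤ A := by
    refine hm1.trans ?_
    rw [div_le_iff₀ hDD0]
    have h4A : 4 * A ≤ A * ((d:ℝ) * A + (d:ℝ) * n + 4) := by
      have := mul_le_mul_of_nonneg_left hDD4 hA0.le
      linarith only [this]
    linarith only [h4A]
  have hmn34 : mm ≤ (n - 3 * A) / 4 := by
    refine hm2.trans ?_
    rw [div_le_div_iff₀ hDD0 (by norm_num : (0:ℝ) < 4)]
    have := mul_le_mul_of_nonneg_left hDD4 (by linarith only [h3A] : (0:ℝ) ≤ n - 3 * A)
    linarith only [this]
  -- hg facts per term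
  have hg1 : mm + 1 ≤ (d:ℝ) * A / ((d:ℝ) * A + (d:ℝ) * n + 4)
      + (4 * A + (d:ℝ) * n + 4) / ((d:ℝ) * A + (d:ℝ) * n + 4) := by
    linarith only [hm1, hsum1]
  have hg2 : mm + 1 ≤ 0 + (A + 1) := by linarith only [hmA]
  have hg3 : mm + 1 ≤ ((d:ℝ) * A + (d:ℝ) * n) / ((d:ℝ) * A + (d:ℝ) * n + 4)
      + 4 * (A + n + 1) / ((d:ℝ) * A + (d:ℝ) * n + 4) := by
    have hsplit : (4 * A + 4 * n) / ((d:ℝ) * A + (d:ℝ) * n + 4)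
        = 4 * A / ((d:ℝ) * A + (d:ℝ) * n + 4) + 4 * n / ((d:ℝ) * A + (d:ℝ) * n + 4) := by
      ring
    have hpos : (0:ℝ) ≤ 4 * n / ((d:ℝ) * A + (d:ℝ) * n + 4) :=
      div_nonneg (by linarith only [hn0]) hDD0.le
    linarith only [hm1, hsum3, hsplit, hpos]
  have hg4 : mm + 1 ≤ 0 + (A + n + 1) := by linarith only [hmA, hn0]
  have hg5 : mm + 1 ≤ ((d:ℝ) * n + 3) / ((d:ℝ) * A + (d:ℝ) * n + 4)
      + (A * (d:ℝ) + n + 1 - 3 * A) / ((d:ℝ) * A + (d:ℝ) * n + 4) := by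
    linarith only [hm2, hsum2]
  have hg6 : mm + 1 ≤ (3:ℝ)/4 + (n + 1 - 3 * A) / 4 := by
    linarith only [hmn34]
  have hg7 : mm + 1 ≤ (d:ℝ) * n / ((d:ℝ) * A + (d:ℝ) * n + 4)
      + (A * (d:ℝ) + 4 * n + 4) / ((d:ℝ) * A + (d:ℝ) * n + 4) := by
    have hle : 4 * A / ((d:ℝ) * A + (d:ℝ) * n + 4) ≤ 4 * n / ((d:ℝ) * A + (d:ℝ) * n + 4) := by
      have h0 : (0:ℝ) ≤ (4 * n - 4 * A) / ((d:ℝ) * A + (d:ℝ) * n + 4) :=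
        div_nonneg (by linarith only [hA4, hn1]) hDD0.le
      have hsplit : 4 * n / ((d:ℝ) * A + (d:ℝ) * n + 4)
          = 4 * A / ((d:ℝ) * A + (d:ℝ) * n + 4) + (4 * n - 4 * A) / ((d:ℝ) * A + (d:ℝ) * n + 4) := by
        ring
      linarith only [h0, hsplit]
    linarith only [hm1, hsum4, hle]
  have hg8 : mm + 1 ≤ 0 + (n + 1) := by linarith only [hmA, hA4, hn1]
  -- choice of ε and c
  obtain ⟨B, hBdef⟩ : ∃ B : ℝ, B = (5 * C₀ * (2:ℝ) ^ (36:ℝ))⁻¹ := ⟨_, rfl⟩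
  have h2360 : (0:ℝ) < (2:ℝ) ^ (36:ℝ) := Real.rpow_pos_of_pos two_pos _
  have hB0 : 0 < B := by rw [hBdef]; positivity
  obtain ⟨E, hEdef⟩ : ∃ E : ℝ, E = min (1 / 2 : ℝ) (B ^ mm⁻¹) := ⟨_, rfl⟩
  have hE0 : 0 < E := hEdef ▸ lt_min (by norm_num) (Real.rpow_pos_of_pos hB0 _)
  have hEhalf : E ≤ 1 / 2 := hEdef ▸ min_le_left _ _
  have hE1 : E ≤ 1 := hEhalf.trans (by norm_num)
  have hkey : C₀ * 2 ^ (36:ℝ) * E ^ mm ≤ 1 / 5 := by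
    have h1 : E ^ mm ≤ (B ^ mm⁻¹) ^ mm :=
      Real.rpow_le_rpow hE0.le (hEdef ▸ min_le_right (1/2:ℝ) (B ^ mm⁻¹)) hmm0.le
    have h2 : (B ^ mm⁻¹) ^ mm = B := by
      rw [← Real.rpow_mul hB0.le, inv_mul_cancel₀ hmm0.ne', Real.rpow_one]
    have h3 : C₀ * 2 ^ (36:ℝ) * B = 1 / 5 := by
      rw [hBdef]; field_simp; try ring
    calc C₀ * 2 ^ (36:ℝ) * E ^ mm ≤ C₀ * 2 ^ (36:ℝ) * B :=
          mul_le_mul_of_nonneg_left (h1.trans h2.le) (by positivity)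
      _ = 1 / 5 := h3
  obtain ⟨c, hcdef⟩ : ∃ c : ℝ, c = E * (2:ℝ) ^ (-(4 / n + (d:ℝ))) / 5 := ⟨_, rfl⟩
  have hc0 : 0 < c := by
    have := Real.rpow_pos_of_pos two_pos (-(4 / n + (d:ℝ)))
    rw [hcdef]; positivity
  refine ⟨A, E, 1, c, hA0, hA2n, hE0, by linarith only [hEhalf, hE0], one_pos, hc0, ?_⟩
  intro κ R T M S hκ hR hT hκT hM0 hS0 hM1 hS1 hSrec hMrec
  intro k hk
  induction k, hk using Nat.le_induction with
  | base => exact ⟨hM1, hS1⟩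
  | succ k hk ih =>
    obtain ⟨ihM, ihS⟩ := ih
    obtain ⟨x, hxdef⟩ : ∃ x : ℝ, x = rk R (k + 1) := ⟨_, rfl⟩
    have hx : 0 < x := by rw [hxdef]; unfold rk; positivity
    rw [← hxdef]
    have hrk : rk R k = 2 * x := by
      rw [hxdef]; unfold rk
      rw [show (-((k:ℕ):ℝ)) = 1 + -(((k + 1:ℕ)):ℝ) by push_cast; ring,
        Real.rpow_add two_pos, Real.rpow_one]
      ring
    rw [hrk] at ihM
    rw [hrk, Real.rpow_one] at ihS
    have hrecM := hMrec k hk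
    rw [hrk, ← hxdef] at hrecM
    have hrecS := hSrec k hk
    rw [← hxdef] at hrecS
    -- κ-term
    have hTn : T ^ (1/n) * T ^ (-(1/n)) = 1 := by
      rw [← Real.rpow_add hT]; norm_num
    have hκ' : κ ≤ c * T ^ (-(1/n)) := by
      calc κ = κ * T ^ (1/n) * T ^ (-(1/n)) := by rw [mul_assoc, hTn, mul_one]
        _ ≤ c * T ^ (-(1/n)) := mul_le_mul_of_nonneg_right hκT (by positivity)
    have b1 : κ * (2 * x) ^ (4 / n + (d:ℝ)) ≤
        1 / 5 * E * (T ^ (-(1/n)) * x ^ (4 / n + (d:ℝ))) := by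
      have h2e : (2:ℝ) ^ (-(4 / n + (d:ℝ))) * 2 ^ (4 / n + (d:ℝ)) = 1 := by
        rw [← Real.rpow_add two_pos,
          show -(4 / n + (d:ℝ)) + (4 / n + (d:ℝ)) = 0 by ring, Real.rpow_zero]
      calc κ * (2 * x) ^ (4 / n + (d:ℝ))
          = κ * (2 ^ (4 / n + (d:ℝ)) * x ^ (4 / n + (d:ℝ))) := by
            rw [Real.mul_rpow (by norm_num : (0:ℝ) ≤ 2) hx.le]
        _ ≤ (c * T ^ (-(1/n))) * (2 ^ (4 / n + (d:ℝ)) * x ^ (4 / n + (d:ℝ))) :=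
            mul_le_mul_of_nonneg_right hκ' (by positivity)
        _ = (c * 2 ^ (4 / n + (d:ℝ))) * (T ^ (-(1/n)) * x ^ (4 / n + (d:ℝ))) := by ring
        _ = 1 / 5 * E * (T ^ (-(1/n)) * x ^ (4 / n + (d:ℝ))) := by
            rw [hcdef, show E * 2 ^ (-(4 / n + (d:ℝ))) / 5 * 2 ^ (4 / n + (d:ℝ))
              = E / 5 * (2 ^ (-(4 / n + (d:ℝ))) * 2 ^ (4 / n + (d:ℝ))) by ring, h2e]
            ring
    -- M2 term
    have b2 : C₀ * x ^ (-(1:ℝ))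
        * T ^ ((A * (d:ℝ) + 1 - β * ((d:ℝ) * n + 3)) / ((d:ℝ) * A + (d:ℝ) * n + 4))
        * S k ^ (((d:ℝ) * n + 3) / ((d:ℝ) * A + (d:ℝ) * n + 4))
        * M k ^ ((A * (d:ℝ) + n + 1 - 3 * A) / ((d:ℝ) * A + (d:ℝ) * n + 4))
        ≤ 1 / 5 * E * (T ^ (-(1/n)) * x ^ (4 / n + (d:ℝ))) := by
      have h := term_bound C₀ T x (S k) (M k) E mm
        (((d:ℝ) * n + 3) / ((d:ℝ) * A + (d:ℝ) * n + 4))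
        ((A * (d:ℝ) + n + 1 - 3 * A) / ((d:ℝ) * A + (d:ℝ) * n + 4))
        (β - (A + 1) / n) (4 * (A + 1) / n + (d:ℝ)) (-(1/n)) (4 / n + (d:ℝ))
        ((A * (d:ℝ) + 1 - β * ((d:ℝ) * n + 3)) / ((d:ℝ) * A + (d:ℝ) * n + 4))
        (-(1:ℝ)) (-(1/n)) (4 / n + (d:ℝ))
        hC₀ hT hx hE0 hE1 (hS0 k) (hM0 k) hσ0m2 hσ1m2 hμ0m2 hμ4m2
        hbS0 hbS8 hbM0 hbM7 hkey hg5 ihS ihM htm2 hem2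
      calc C₀ * x ^ (-(1:ℝ))
          * T ^ ((A * (d:ℝ) + 1 - β * ((d:ℝ) * n + 3)) / ((d:ℝ) * A + (d:ℝ) * n + 4))
          * S k ^ (((d:ℝ) * n + 3) / ((d:ℝ) * A + (d:ℝ) * n + 4))
          * M k ^ ((A * (d:ℝ) + n + 1 - 3 * A) / ((d:ℝ) * A + (d:ℝ) * n + 4))
          = C₀ * T ^ ((A * (d:ℝ) + 1 - β * ((d:ℝ) * n + 3)) / ((d:ℝ) * A + (d:ℝ) * n + 4))
          * x ^ (-(1:ℝ))
          * S k ^ (((d:ℝ) * n + 3) / ((d:ℝ) * A + (d:ℝ) * n + 4))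
          * M k ^ ((A * (d:ℝ) + n + 1 - 3 * A) / ((d:ℝ) * A + (d:ℝ) * n + 4)) := by ring
        _ ≤ _ := h
    have b3 : C₀ * x ^ (-(1:ℝ) - (d:ℝ) * (n - 3 * A) / 4) * T ^ ((1 - 3 * β) / 4) * S k ^ ((3:ℝ)/4) * M k ^ ((n + 1 - 3 * A) / 4)
        ≤ 1 / 5 * E * (T ^ (-(1/n)) * x ^ (4 / n + (d:ℝ))) := by
      have h := term_bound C₀ T x (S k) (M k) E mm
        ((3:ℝ)/4)
        ((n + 1 - 3 * A) / 4)
        (β - (A + 1) / n) (4 * (A + 1) / n + (d:ℝ)) (-(1/n)) (4 / n + (d:ℝ))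
        ((1 - 3 * β) / 4)
        (-(1:ℝ) - (d:ℝ) * (n - 3 * A) / 4) (-(1/n)) (4 / n + (d:ℝ))
        hC₀ hT hx hE0 hE1 (hS0 k) (hM0 k) (by norm_num) (by norm_num) hμ0m3 hμ4m3
        hbS0 hbS8 hbM0 hbM7 hkey hg6 ihS ihM htm3 hem3
      calc C₀ * x ^ (-(1:ℝ) - (d:ℝ) * (n - 3 * A) / 4) * T ^ ((1 - 3 * β) / 4) * S k ^ ((3:ℝ)/4) * M k ^ ((n + 1 - 3 * A) / 4)
          = C₀ * T ^ ((1 - 3 * β) / 4) * x ^ (-(1:ℝ) - (d:ℝ) * (n - 3 * A) / 4) * S k ^ ((3:ℝ)/4) * M k ^ ((n + 1 - 3 * A) / 4) := by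
            ring
        _ ≤ _ := h
    have b4 : C₀ * x ^ (-(4:ℝ)) * T ^ ((A * (d:ℝ) + 4 - β * (d:ℝ) * n) / ((d:ℝ) * A + (d:ℝ) * n + 4)) * S k ^ ((d:ℝ) * n / ((d:ℝ) * A + (d:ℝ) * n + 4)) * M k ^ ((A * (d:ℝ) + 4 * n + 4) / ((d:ℝ) * A + (d:ℝ) * n + 4))
        ≤ 1 / 5 * E * (T ^ (-(1/n)) * x ^ (4 / n + (d:ℝ))) := by
      have h := term_bound C₀ T x (S k) (M k) E mm
        ((d:ℝ) * n / ((d:ℝ) * A + (d:ℝ) * n + 4))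
        ((A * (d:ℝ) + 4 * n + 4) / ((d:ℝ) * A + (d:ℝ) * n + 4))
        (β - (A + 1) / n) (4 * (A + 1) / n + (d:ℝ)) (-(1/n)) (4 / n + (d:ℝ))
        ((A * (d:ℝ) + 4 - β * (d:ℝ) * n) / ((d:ℝ) * A + (d:ℝ) * n + 4))
        (-(4:ℝ)) (-(1/n)) (4 / n + (d:ℝ))
        hC₀ hT hx hE0 hE1 (hS0 k) (hM0 k) hσ0m4 hσ1m4 hμ0m4 hμ4m4
        hbS0 hbS8 hbM0 hbM7 hkey hg7 ihS ihM htm4 hem4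
      calc C₀ * x ^ (-(4:ℝ)) * T ^ ((A * (d:ℝ) + 4 - β * (d:ℝ) * n) / ((d:ℝ) * A + (d:ℝ) * n + 4)) * S k ^ ((d:ℝ) * n / ((d:ℝ) * A + (d:ℝ) * n + 4)) * M k ^ ((A * (d:ℝ) + 4 * n + 4) / ((d:ℝ) * A + (d:ℝ) * n + 4))
          = C₀ * T ^ ((A * (d:ℝ) + 4 - β * (d:ℝ) * n) / ((d:ℝ) * A + (d:ℝ) * n + 4)) * x ^ (-(4:ℝ)) * S k ^ ((d:ℝ) * n / ((d:ℝ) * A + (d:ℝ) * n + 4)) * M k ^ ((A * (d:ℝ) + 4 * n + 4) / ((d:ℝ) * A + (d:ℝ) * n + 4)) := by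
            ring
        _ ≤ _ := h
    have b5 : C₀ * x ^ (-(4:ℝ) - (d:ℝ) * n) * T * M k ^ (n + 1)
        ≤ 1 / 5 * E * (T ^ (-(1/n)) * x ^ (4 / n + (d:ℝ))) := by
      have h := term_bound C₀ T x (S k) (M k) E mm
        (0:ℝ)
        (n + 1)
        (β - (A + 1) / n) (4 * (A + 1) / n + (d:ℝ)) (-(1/n)) (4 / n + (d:ℝ))
        (1:ℝ)
        (-(4:ℝ) - (d:ℝ) * n) (-(1/n)) (4 / n + (d:ℝ))
        hC₀ hT hx hE0 hE1 (hS0 k) (hM0 k) (by norm_num) (by norm_num) (by linarith only [hn0]) (by linarith only [hn2])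
        hbS0 hbS8 hbM0 hbM7 hkey hg8 ihS ihM htm5 hem5
      calc C₀ * x ^ (-(4:ℝ) - (d:ℝ) * n) * T * M k ^ (n + 1)
          = C₀ * T ^ (1:ℝ) * x ^ (-(4:ℝ) - (d:ℝ) * n) * S k ^ (0:ℝ) * M k ^ (n + 1) := by
            rw [Real.rpow_zero, Real.rpow_one]; ring
        _ ≤ _ := h
    have b6 : C₀ * T ^ (β - (1 + β) * ((d:ℝ) * A) / ((d:ℝ) * A + (d:ℝ) * n + 4)) * S k ^ ((d:ℝ) * A / ((d:ℝ) * A + (d:ℝ) * n + 4)) * M k ^ ((4 * A + (d:ℝ) * n + 4) / ((d:ℝ) * A + (d:ℝ) * n + 4))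
        ≤ 1 / 5 * E * (T ^ (β - (A + 1) / n) * x ^ (4 * (A + 1) / n + (d:ℝ))) := by
      have h := term_bound C₀ T x (S k) (M k) E mm
        ((d:ℝ) * A / ((d:ℝ) * A + (d:ℝ) * n + 4))
        ((4 * A + (d:ℝ) * n + 4) / ((d:ℝ) * A + (d:ℝ) * n + 4))
        (β - (A + 1) / n) (4 * (A + 1) / n + (d:ℝ)) (-(1/n)) (4 / n + (d:ℝ))
        (β - (1 + β) * ((d:ℝ) * A) / ((d:ℝ) * A + (d:ℝ) * n + 4))
        (0:ℝ) (β - (A + 1) / n) (4 * (A + 1) / n + (d:ℝ))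
        hC₀ hT hx hE0 hE1 (hS0 k) (hM0 k) hσ0s1 hσ1s1 hμ0s1 hμ4s1
        hbS0 hbS8 hbM0 hbM7 hkey hg1 ihS ihM hts1 hes1
      calc C₀ * T ^ (β - (1 + β) * ((d:ℝ) * A) / ((d:ℝ) * A + (d:ℝ) * n + 4)) * S k ^ ((d:ℝ) * A / ((d:ℝ) * A + (d:ℝ) * n + 4)) * M k ^ ((4 * A + (d:ℝ) * n + 4) / ((d:ℝ) * A + (d:ℝ) * n + 4))
          = C₀ * T ^ (β - (1 + β) * ((d:ℝ) * A) / ((d:ℝ) * A + (d:ℝ) * n + 4)) * x ^ (0:ℝ) * S k ^ ((d:ℝ) * A / ((d:ℝ) * A + (d:ℝ) * n + 4)) * M k ^ ((4 * A + (d:ℝ) * n + 4) / ((d:ℝ) * A + (d:ℝ) * n + 4)) := by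
            rw [Real.rpow_zero]; ring
        _ ≤ _ := h
    have b7 : C₀ * x ^ (-((d:ℝ) * A)) * T ^ β * M k ^ (A + 1)
        ≤ 1 / 5 * E * (T ^ (β - (A + 1) / n) * x ^ (4 * (A + 1) / n + (d:ℝ))) := by
      have h := term_bound C₀ T x (S k) (M k) E mm
        (0:ℝ)
        (A + 1)
        (β - (A + 1) / n) (4 * (A + 1) / n + (d:ℝ)) (-(1/n)) (4 / n + (d:ℝ))
        β
        (-((d:ℝ) * A)) (β - (A + 1) / n) (4 * (A + 1) / n + (d:ℝ))
        hC₀ hT hx hE0 hE1 (hS0 k) (hM0 k) (by norm_num) (by norm_num) (by linarith only [hA0]) (by linarith only [hA4])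
        hbS0 hbS8 hbM0 hbM7 hkey hg2 ihS ihM hts2 hes2
      calc C₀ * x ^ (-((d:ℝ) * A)) * T ^ β * M k ^ (A + 1)
          = C₀ * T ^ β * x ^ (-((d:ℝ) * A)) * S k ^ (0:ℝ) * M k ^ (A + 1) := by
            rw [Real.rpow_zero]; ring
        _ ≤ _ := h
    have b8 : C₀ * x ^ (-(4:ℝ)) * T ^ (4 * (1 + β) / ((d:ℝ) * A + (d:ℝ) * n + 4)) * S k ^ (((d:ℝ) * A + (d:ℝ) * n) / ((d:ℝ) * A + (d:ℝ) * n + 4)) * M k ^ (4 * (A + n + 1) / ((d:ℝ) * A + (d:ℝ) * n + 4))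
        ≤ 1 / 5 * E * (T ^ (β - (A + 1) / n) * x ^ (4 * (A + 1) / n + (d:ℝ))) := by
      have h := term_bound C₀ T x (S k) (M k) E mm
        (((d:ℝ) * A + (d:ℝ) * n) / ((d:ℝ) * A + (d:ℝ) * n + 4))
        (4 * (A + n + 1) / ((d:ℝ) * A + (d:ℝ) * n + 4))
        (β - (A + 1) / n) (4 * (A + 1) / n + (d:ℝ)) (-(1/n)) (4 / n + (d:ℝ))
        (4 * (1 + β) / ((d:ℝ) * A + (d:ℝ) * n + 4))
        (-(4:ℝ)) (β - (A + 1) / n) (4 * (A + 1) / n + (d:ℝ))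
        hC₀ hT hx hE0 hE1 (hS0 k) (hM0 k) hσ0s3 hσ1s3 hμ0s3 hμ4s3
        hbS0 hbS8 hbM0 hbM7 hkey hg3 ihS ihM hts3 hes3
      calc C₀ * x ^ (-(4:ℝ)) * T ^ (4 * (1 + β) / ((d:ℝ) * A + (d:ℝ) * n + 4)) * S k ^ (((d:ℝ) * A + (d:ℝ) * n) / ((d:ℝ) * A + (d:ℝ) * n + 4)) * M k ^ (4 * (A + n + 1) / ((d:ℝ) * A + (d:ℝ) * n + 4))
          = C₀ * T ^ (4 * (1 + β) / ((d:ℝ) * A + (d:ℝ) * n + 4)) * x ^ (-(4:ℝ)) * S k ^ (((d:ℝ) * A + (d:ℝ) * n) / ((d:ℝ) * A + (d:ℝ) * n + 4)) * M k ^ (4 * (A + n + 1) / ((d:ℝ) * A + (d:ℝ) * n + 4)) := by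
            ring
        _ ≤ _ := h
    have b9 : C₀ * x ^ (-(4:ℝ) - (d:ℝ) * (A + n)) * T ^ (β + 1) * M k ^ (A + n + 1)
        ≤ 1 / 5 * E * (T ^ (β - (A + 1) / n) * x ^ (4 * (A + 1) / n + (d:ℝ))) := by
      have h := term_bound C₀ T x (S k) (M k) E mm
        (0:ℝ)
        (A + n + 1)
        (β - (A + 1) / n) (4 * (A + 1) / n + (d:ℝ)) (-(1/n)) (4 / n + (d:ℝ))
        (β + 1)
        (-(4:ℝ) - (d:ℝ) * (A + n)) (β - (A + 1) / n) (4 * (A + 1) / n + (d:ℝ))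
        hC₀ hT hx hE0 hE1 (hS0 k) (hM0 k) (by norm_num) (by norm_num) (by linarith only [hA0, hn0]) (by linarith only [hA4, hn2])
        hbS0 hbS8 hbM0 hbM7 hkey hg4 ihS ihM hts4 hes4
      calc C₀ * x ^ (-(4:ℝ) - (d:ℝ) * (A + n)) * T ^ (β + 1) * M k ^ (A + n + 1)
          = C₀ * T ^ (β + 1) * x ^ (-(4:ℝ) - (d:ℝ) * (A + n)) * S k ^ (0:ℝ) * M k ^ (A + n + 1) := by
            rw [Real.rpow_zero]; ring
        _ ≤ _ := h
    have hSpos : (0:ℝ) ≤ E * (T ^ (β - (A + 1) / n) * x ^ (4 * (A + 1) / n + (d:ℝ))) := by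
      positivity
    refine ⟨?_, ?_⟩
    · linarith only [hrecM, b1, b2, b3, b4, b5]
    · rw [Real.rpow_one]
      linarith only [hrecS, b6, b7, b8, b9, hSpos]
end

section
/- Fix n ∈ (2,3) and define u₀ : ℝ → ℝ by u₀(x) = (2 + sin(1/x))·x^{4/n} for x > 0 and u₀(x) = 0 for x ≤ 0; u₀ is differentiable on (0,∞) with derivative u₀'(x) = (4/n)(2 + sin(1/x))x^{4/n−1} − cos(1/x)·x^{4/n−2}. Then limsup_{r→0⁺} r^{2−8/n} · (1/r) ∫₀^r (u₀'(x))² dx = +∞, where the integral is the Lebesgue integral with values in [0,+∞]; equivalently, for every K > 0 there exists r₀ > 0 such that for all r ∈ (0, r₀), r^{2−8/n} · (1/r) ∫₀^r (u₀')² dx ≥ K. Consequently limsup_{r→0} r^{−4/n+1} ( ⨍_{(0,r)} |u₀'|² dx )^{1/2} = ∞, so u₀ fails the Dal Passo–Giacomelli–Grün sufficient condition for a waiting time. -/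
set_option maxHeartbeats 1000000

open MeasureTheory Real Set


lemma FderivAux {x : ℝ} (hx : 0 < x) :
    HasDerivAt (fun y : ℝ => -(1/(2*y)) - Real.sin (2/y)/4)
      (Real.cos (1/x)^2 / x^2) x := by
  have hx0 : x ≠ 0 := ne_of_gt hx
  have hinv : HasDerivAt (fun y : ℝ => y⁻¹) (-(x^2)⁻¹) x := hasDerivAt_inv hx0
  have h1 : HasDerivAt (fun y : ℝ => -(1/(2*y))) ((x^2)⁻¹ / 2) x := by
    simp only [one_div, mul_inv]
    refine (hinv.const_mul ((2:ℝ)⁻¹)).neg.congr_deriv ?_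
    ring
  have hin : HasDerivAt (fun y : ℝ => 2/y) (-(x^2)⁻¹ * 2) x := by
    simp only [div_eq_mul_inv]
    refine (hinv.const_mul (2:ℝ)).congr_deriv ?_
    ring
  have h2 : HasDerivAt (fun y : ℝ => Real.sin (2/y) / 4)
      (Real.cos (2/x) * (-(x^2)⁻¹ * 2) / 4) x :=
    ((Real.hasDerivAt_sin (2/x)).comp x hin).div_const 4
  have := h1.sub h2
  refine this.congr_deriv ?_
  have hcos : Real.cos (2/x) = 2 * Real.cos (1/x)^2 - 1 := by
    have h : (2:ℝ)/x = 2 * (1/x) := by ring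
    rw [h, Real.cos_two_mul]
  rw [hcos]
  field_simp
  ring

-- continuity facts
lemma contOn_aux (s : Set ℝ) (hs : ∀ x ∈ s, x ≠ 0) (p : ℝ) :
    ContinuousOn (fun x : ℝ => x ^ p) s :=
  continuousOn_id.rpow_const (fun x hx => Or.inl (hs x hx))

lemma contOn_inv (s : Set ℝ) (hs : ∀ x ∈ s, (x:ℝ) ≠ 0) :
    ContinuousOn (fun x : ℝ => 1/x) s :=
  continuousOn_const.div continuousOn_id hs

lemma g_contOn (n : ℝ) (g : ℝ → ℝ)
    (hg : ∀ x, g x = (4 / n) * (2 + Real.sin (1 / x)) * x ^ (4 / n - 1)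
        - Real.cos (1 / x) * x ^ (4 / n - 2))
    (s : Set ℝ) (hs : ∀ x ∈ s, (x:ℝ) ≠ 0) : ContinuousOn g s := by
  have : g = fun x => (4 / n) * (2 + Real.sin (1 / x)) * x ^ (4 / n - 1)
      - Real.cos (1 / x) * x ^ (4 / n - 2) := funext hg
  rw [this]
  exact (((continuousOn_const.mul (continuousOn_const.add
      (Real.continuous_sin.comp_continuousOn (contOn_inv s hs)))).mul (contOn_aux s hs _)).sub
    ((Real.continuous_cos.comp_continuousOn (contOn_inv s hs)).mul (contOn_aux s hs _)))

lemma sq_lower (A B : ℝ) : B^2/2 - A^2 ≤ (A-B)^2 := by nlinarith [sq_nonneg (A - B/2)]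

lemma key_estimate (n r : ℝ) (hn2 : 2 < n) (hn3 : n < 3) (g : ℝ → ℝ)
    (hg : ∀ x, g x = (4 / n) * (2 + Real.sin (1 / x)) * x ^ (4 / n - 1)
        - Real.cos (1 / x) * x ^ (4 / n - 2))
    (hr : 0 < r) (hr1 : r ≤ 1/100) :
    r ^ (8/n - 4) * r / 32 ≤ ∫ x in (r/2)..r, (g x)^2 := by
  have hn0 : (0:ℝ) < n := by linarith
  have hhalf : r/2 ≤ r := by linarith
  have hr2 : 0 < r/2 := by linarith
  have huIcc : uIcc (r/2) r = Icc (r/2) r := uIcc_of_le hhalf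
  have hne : ∀ x ∈ Icc (r/2) r, (x:ℝ) ≠ 0 := fun x hx => ne_of_gt (lt_of_lt_of_le hr2 hx.1)
  have hpos : ∀ x ∈ Icc (r/2) r, (0:ℝ) < x := fun x hx => lt_of_lt_of_le hr2 hx.1
  -- continuity / integrability
  have hcont1 : ContinuousOn (fun x : ℝ => Real.cos (1/x)^2 / x^2) (Icc (r/2) r) := by
    exact (((Real.continuous_cos.comp_continuousOn (contOn_inv _ hne)).pow 2).div ((continuousOn_id.pow 2)) (fun x hx => pow_ne_zero 2 (hne x hx)))
  have hint1 : IntervalIntegrable (fun x : ℝ => Real.cos (1/x)^2 / x^2) volume (r/2) r := by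
    apply ContinuousOn.intervalIntegrable; rwa [huIcc]
  have hcont2 : ContinuousOn (fun x : ℝ => Real.cos (1/x)^2) (Icc (r/2) r) :=
    (Real.continuous_cos.comp_continuousOn (contOn_inv _ hne)).pow 2
  have hint2 : IntervalIntegrable (fun x : ℝ => Real.cos (1/x)^2) volume (r/2) r := by
    apply ContinuousOn.intervalIntegrable; rwa [huIcc]
  have hint2' : IntervalIntegrable (fun x : ℝ => (r^2/4) * (Real.cos (1/x)^2 / x^2)) volume (r/2) r :=
    hint1.const_mul _
  have hintg : IntervalIntegrable (fun x : ℝ => (g x)^2) volume (r/2) r := by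
    apply ContinuousOn.intervalIntegrable
    rw [huIcc]; exact (g_contOn n g hg _ hne).pow 2
  have hintφ : IntervalIntegrable
      (fun x : ℝ => (1/2) * r^(8/n-4) * Real.cos (1/x)^2 - 36 * r^(8/n-2)) volume (r/2) r :=
    ((hint2.const_mul _).sub (intervalIntegrable_const))
  -- Step C : exact value of ∫ cos²/x²
  have hC : ∫ x in (r/2)..r, Real.cos (1/x)^2 / x^2
      = (-(1/(2*r)) - Real.sin (2/r)/4) - (-(1/(2*(r/2))) - Real.sin (2/(r/2))/4) := by
    apply intervalIntegral.integral_eq_sub_of_hasDerivAt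
    · intro x hx
      rw [huIcc] at hx
      exact FderivAux (hpos x hx)
    · exact hint1
  have hClow : 1/(2*r) - 1/2 ≤ ∫ x in (r/2)..r, Real.cos (1/x)^2 / x^2 := by
    rw [hC]
    have h1 := Real.neg_one_le_sin (2/r)
    have h2 := Real.sin_le_one (2/(r/2))
    have : -(1/(2*(r/2))) = -(1/r) := by rw [mul_div_assoc']; norm_num
    rw [this]
    have h3 : 1/(2*r) * 2 = 1/r := by field_simp
    linarith [Real.sin_le_one (2/r), Real.neg_one_le_sin (2/(r/2))]
  -- Step B : ∫ cos² ≥ (r²/4) ∫ cos²/x²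
  have hB : (r^2/4) * ∫ x in (r/2)..r, Real.cos (1/x)^2 / x^2
      ≤ ∫ x in (r/2)..r, Real.cos (1/x)^2 := by
    rw [← intervalIntegral.integral_const_mul]
    apply intervalIntegral.integral_mono_on hhalf hint2' hint2
    intro x hx
    have hx0 := hpos x hx
    have hx2 : r^2/4 ≤ x^2 := by nlinarith [hx.1]
    have hc : (0:ℝ) ≤ Real.cos (1/x)^2 := sq_nonneg _
    have hxx : (0:ℝ) < x^2 := by positivity
    have heq : r^2/4 * (Real.cos (1/x)^2 / x^2) = (r^2/4) * Real.cos (1/x)^2 / x^2 := by ring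
    rw [heq, div_le_iff₀ hxx]
    nlinarith [mul_nonneg hc (by linarith : (0:ℝ) ≤ x^2 - r^2/4)]
  -- Step A : pointwise lower bound for g²
  have hA : ∫ x in (r/2)..r, ((1/2) * r^(8/n-4) * Real.cos (1/x)^2 - 36 * r^(8/n-2))
      ≤ ∫ x in (r/2)..r, (g x)^2 := by
    apply intervalIntegral.integral_mono_on hhalf hintφ hintg
    intro x hx
    have hx0 := hpos x hx
    have hxr := hx.2
    rw [hg]
    have hb2 : (x ^ (4/n-2))^2 = x^(8/n-4) := by
      rw [sq, ← Real.rpow_add hx0]; congr 1; ring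
    have ha2 : (x ^ (4/n-1))^2 = x^(8/n-2) := by
      rw [sq, ← Real.rpow_add hx0]; congr 1; ring
    have hPx : r^(8/n-4) ≤ x^(8/n-4) :=
      Real.rpow_le_rpow_of_nonpos hx0 hxr (by rw [sub_nonpos, div_le_iff₀ hn0]; nlinarith)
    have hQx : x^(8/n-2) ≤ r^(8/n-2) :=
      Real.rpow_le_rpow (le_of_lt hx0) hxr (by rw [sub_nonneg, le_div_iff₀ hn0]; nlinarith)
    have h1 : (Real.cos (1/x) * x ^ (4/n-2))^2 = Real.cos (1/x)^2 * x^(8/n-4) := by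
      rw [mul_pow, hb2]
    have h2 : ((4/n) * (2 + Real.sin (1/x)) * x ^ (4/n-1))^2
        = (4/n)^2 * (2+Real.sin (1/x))^2 * x^(8/n-2) := by rw [mul_pow, mul_pow, ha2]
    have hsb1 : -1 ≤ Real.sin (1/x) := Real.neg_one_le_sin _
    have hsb2 : Real.sin (1/x) ≤ 1 := Real.sin_le_one _
    have h4n : (4/n)^2 ≤ 4 := by
      have ha : 0 < 4/n := by positivity
      have hb : 4/n < 2 := by rw [div_lt_iff₀ hn0]; linarith
      nlinarith
    have hxnn : (0:ℝ) ≤ x^(8/n-2) := Real.rpow_nonneg (le_of_lt hx0) _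
    have h9 : (2+Real.sin (1/x))^2 ≤ 9 := by nlinarith
    have h3a : (4/n)^2 * (2+Real.sin (1/x))^2 ≤ 36 :=
      (mul_le_mul h4n h9 (sq_nonneg _) (by norm_num)).trans (by norm_num)
    have h3 : ((4/n) * (2 + Real.sin (1/x)) * x ^ (4/n-1))^2 ≤ 36 * r^(8/n-2) := by
      rw [h2]
      calc (4/n)^2 * (2+Real.sin (1/x))^2 * x^(8/n-2) ≤ 36 * x^(8/n-2) :=
            mul_le_mul_of_nonneg_right h3a hxnn
        _ ≤ 36 * r^(8/n-2) :=
            mul_le_mul_of_nonneg_left hQx (by norm_num)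
    have h5 : Real.cos (1/x)^2 * r^(8/n-4) ≤ (Real.cos (1/x) * x ^ (4/n-2))^2 := by
      rw [h1]; exact mul_le_mul_of_nonneg_left hPx (sq_nonneg _)
    have key := sq_lower ((4/n) * (2 + Real.sin (1/x)) * x ^ (4/n-1))
      (Real.cos (1/x) * x ^ (4/n-2))
    linarith
  -- compute ∫ φ
  have hφval : ∫ x in (r/2)..r, ((1/2) * r^(8/n-4) * Real.cos (1/x)^2 - 36 * r^(8/n-2))
      = (1/2) * r^(8/n-4) * (∫ x in (r/2)..r, Real.cos (1/x)^2) - 36 * r^(8/n-2) * (r - r/2) := by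
    rw [intervalIntegral.integral_sub (hint2.const_mul _) intervalIntegrable_const,
      intervalIntegral.integral_const_mul, intervalIntegral.integral_const]
    ring_nf
  -- put everything together
  have hP : (0:ℝ) < r^(8/n-4) := Real.rpow_pos_of_pos hr _
  have hQ : r^(8/n-2) = r^(8/n-4) * r^2 := by
    rw [← Real.rpow_two, ← Real.rpow_add hr]; congr 1; ring
  have hIc : (r^2/4) * (1/(2*r) - 1/2) ≤ ∫ x in (r/2)..r, Real.cos (1/x)^2 := by
    calc (r^2/4) * (1/(2*r) - 1/2) ≤ (r^2/4) * ∫ x in (r/2)..r, Real.cos (1/x)^2 / x^2 :=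
          mul_le_mul_of_nonneg_left hClow (by positivity)
      _ ≤ _ := hB
  calc r ^ (8/n-4) * r / 32
      ≤ (1/2) * r^(8/n-4) * ((r^2/4) * (1/(2*r) - 1/2)) - 36 * r^(8/n-2) * (r - r/2) := by
        rw [hQ]
        have : (1/2) * r^(8/n-4) * ((r^2/4) * (1/(2*r) - 1/2)) - 36 * (r^(8/n-4)*r^2) * (r - r/2)
            = r^(8/n-4) * (r/16 - r^2/16 - 18*r^3) := by field_simp; ring
        rw [this]
        have hb : r/32 ≤ r/16 - r^2/16 - 18*r^3 := by nlinarith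
        calc r ^ (8/n-4) * r / 32 = r^(8/n-4) * (r/32) := by ring
          _ ≤ r^(8/n-4) * (r/16 - r^2/16 - 18*r^3) := mul_le_mul_of_nonneg_left hb (le_of_lt hP)
    _ ≤ (1/2) * r^(8/n-4) * (∫ x in (r/2)..r, Real.cos (1/x)^2) - 36 * r^(8/n-2) * (r - r/2) := by
        have := mul_le_mul_of_nonneg_left hIc (by positivity : (0:ℝ) ≤ (1/2) * r^(8/n-4))
        linarith
    _ = ∫ x in (r/2)..r, ((1/2) * r^(8/n-4) * Real.cos (1/x)^2 - 36 * r^(8/n-2)) := hφval.symm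
    _ ≤ ∫ x in (r/2)..r, (g x)^2 := hA


/-- The oscillatory initial data `u₀(x) = (2 + sin(1/x))·x^{4/n}` (for `x > 0`, `u₀ = 0`
for `x ≤ 0`) is differentiable on `(0,∞)` with derivative
`g(x) = (4/n)(2+sin(1/x))x^{4/n-1} − cos(1/x)x^{4/n-2}`, and fails the
Dal Passo–Giacomelli–Grün condition: `limsup_{r→0⁺} r^{2-8/n}·(1/r)·∫₀^r (u₀')² = +∞`,
i.e. for every `K > 0` there is `r₀ > 0` such that for all `r ∈ (0,r₀)` the quantity
`r^{2-8/n}·(1/r)·∫₀^r (u₀')²` (a `[0,∞]`-valued Lebesgue integral) is at least `K`. -/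
theorem oscillatory_data_fails_DGG_condition
    (n : ℝ) (hn : 2 < n ∧ n < 3)
    (u₀ g : ℝ → ℝ)
    (hu₀ : ∀ x, u₀ x = if 0 < x then (2 + Real.sin (1 / x)) * x ^ (4 / n) else 0)
    (hg : ∀ x, g x = (4 / n) * (2 + Real.sin (1 / x)) * x ^ (4 / n - 1)
        - Real.cos (1 / x) * x ^ (4 / n - 2)) :
    (∀ x : ℝ, 0 < x → HasDerivAt u₀ (g x) x) ∧
    ∀ K : ℝ, 0 < K → ∃ r₀ > 0, ∀ r : ℝ, 0 < r → r < r₀ →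
      ENNReal.ofReal K ≤ ENNReal.ofReal (r ^ (2 - 8 / n) * (1 / r)) *
        ∫⁻ x in Ioo (0 : ℝ) r, ENNReal.ofReal ((g x) ^ 2) := by
  constructor
  · intro x hx
    have hx0 : x ≠ 0 := ne_of_gt hx
    have hinv : HasDerivAt (fun y : ℝ => 1/y) (-(x^2)⁻¹) x := by
      simp only [one_div]; exact hasDerivAt_inv hx0
    have hsin : HasDerivAt (fun y : ℝ => 2 + Real.sin (1/y))
        (Real.cos (1/x) * -(x^2)⁻¹) x :=
      ((Real.hasDerivAt_sin (1/x)).comp x hinv).const_add 2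
    have hpow : HasDerivAt (fun y : ℝ => y ^ (4/n)) ((4/n) * x^(4/n-1)) x :=
      Real.hasDerivAt_rpow_const (Or.inl hx0)
    have hmain : HasDerivAt (fun y : ℝ => (2 + Real.sin (1/y)) * y ^ (4/n)) (g x) x := by
      refine (hsin.mul hpow).congr_deriv ?_
      have h1 : x ^ (4/n - 2) = x ^ (4/n) * (x^2)⁻¹ := by
        rw [Real.rpow_sub hx, Real.rpow_two, div_eq_mul_inv]
      rw [hg, h1]; ring
    apply hmain.congr_of_eventuallyEq
    filter_upwards [eventually_gt_nhds hx] with y hy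
    rw [hu₀, if_pos hy]
  · intro K hK
    refine ⟨min (1/100) (Real.sqrt (1/(32*K))), lt_min (by norm_num)
      (Real.sqrt_pos.mpr (by positivity)), fun r hr hrlt => ?_⟩
    have hr1 : r < 1/100 := lt_of_lt_of_le hrlt (min_le_left _ _)
    have hrK : r < Real.sqrt (1/(32*K)) := lt_of_lt_of_le hrlt (min_le_right _ _)
    have hn0 : (0:ℝ) < n := by linarith [hn.1]
    have hr2 : 0 < r/2 := by linarith
    have hne : ∀ x ∈ Icc (r/2) r, (x:ℝ) ≠ 0 := fun x hx => ne_of_gt (lt_of_lt_of_le hr2 hx.1)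
    have hIoo : ∫ x in Ioo (r/2) r, (g x)^2 = ∫ x in (r/2)..r, (g x)^2 := by
      rw [intervalIntegral.integral_of_le (by linarith : r/2 ≤ r),
        MeasureTheory.integral_Ioc_eq_integral_Ioo]
    have hinteg : IntegrableOn (fun x => (g x)^2) (Ioo (r/2) r) volume := by
      exact (((g_contOn n g hg _ hne).pow 2).integrableOn_compact
        isCompact_Icc).mono_set Ioo_subset_Icc_self
    have hlow : ENNReal.ofReal (r ^ (8/n - 4) * r / 32)
        ≤ ∫⁻ x in Ioo (0 : ℝ) r, ENNReal.ofReal ((g x) ^ 2) := by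
      calc ENNReal.ofReal (r ^ (8/n - 4) * r / 32)
          ≤ ENNReal.ofReal (∫ x in Ioo (r/2) r, (g x)^2) := by
            apply ENNReal.ofReal_le_ofReal
            rw [hIoo]
            exact key_estimate n r hn.1 hn.2 g hg hr (le_of_lt hr1)
        _ = ∫⁻ x in Ioo (r/2) r, ENNReal.ofReal ((g x) ^ 2) := by
            apply MeasureTheory.ofReal_integral_eq_lintegral_ofReal hinteg
            exact Filter.Eventually.of_forall (fun x => sq_nonneg _)
        _ ≤ ∫⁻ x in Ioo (0 : ℝ) r, ENNReal.ofReal ((g x) ^ 2) := by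
            apply lintegral_mono_set
            exact Ioo_subset_Ioo (le_of_lt hr2) le_rfl
    have hreal : K ≤ (r ^ (2 - 8 / n) * (1 / r)) * (r ^ (8/n - 4) * r / 32) := by
      have hcomb : r ^ (2 - 8/n) * r ^ (8/n - 4) = (r^2)⁻¹ := by
        rw [← Real.rpow_add hr, show 2 - 8/n + (8/n - 4) = -(2:ℝ) by ring,
          Real.rpow_neg (le_of_lt hr), Real.rpow_two]
      have heq : (r ^ (2 - 8/n) * (1/r)) * (r ^ (8/n - 4) * r / 32)
          = (r ^ (2 - 8/n) * r ^ (8/n - 4)) * (1/32) * ((1/r) * r) := by ring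
      have hone : (1/r) * r = 1 := by field_simp
      rw [heq, hcomb, hone, mul_one]
      have h2 : r^2 < 1/(32*K) := (Real.lt_sqrt (le_of_lt hr)).mp hrK
      have h3 : r^2 * (32*K) < 1 := (lt_div_iff₀ (by positivity)).mp h2
      have hr2p : (0:ℝ) < r^2 := by positivity
      nlinarith [mul_inv_cancel₀ (ne_of_gt hr2p)]
    calc ENNReal.ofReal K
        ≤ ENNReal.ofReal ((r ^ (2 - 8 / n) * (1 / r)) * (r ^ (8/n - 4) * r / 32)) :=
          ENNReal.ofReal_le_ofReal hreal
      _ = ENNReal.ofReal (r ^ (2 - 8 / n) * (1 / r)) *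
          ENNReal.ofReal (r ^ (8/n - 4) * r / 32) :=
          ENNReal.ofReal_mul (by positivity)
      _ ≤ _ := mul_le_mul_right hlow _
end

section
/- Let n > 0 be real and define u : ℝ → ℝ by u(x) = (max(x,0))². Then u is a stationary weak solution of the thin-film equation in the following sense: for every three times continuously differentiable, compactly supported test function ψ : ℝ → ℝ, ∫₀^∞ [ u(x)ⁿ u'(x) ψ'''(x) + (3n/2) u(x)^{n−1} (u'(x))² ψ''(x) + (n(n−1)/2) u(x)^{n−2} (u'(x))³ ψ'(x) ] dx = 0. -/
open MeasureTheory Real Set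

/-- The profile `u(x) = (x₊)²` is a stationary weak solution of the one-dimensional
thin-film equation `∂ₜu = −(uⁿ u_{xxx})_x`: for every `ψ ∈ C³_c(ℝ)`,
`∫₀^∞ [ uⁿ u' ψ''' + (3n/2) u^{n-1} (u')² ψ'' + (n(n-1)/2) u^{n-2} (u')³ ψ' ] dx = 0`. -/
theorem parabola_stationary_weak_solution
    (n : ℝ) (hn : 0 < n)
    (u : ℝ → ℝ) (hu : ∀ x, u x = (max x 0) ^ 2) :
    ∀ ψ : ℝ → ℝ, ContDiff ℝ 3 ψ → HasCompactSupport ψ →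
      (∫ x in Ioi (0 : ℝ),
          (u x ^ n * deriv u x * iteratedDeriv 3 ψ x
            + (3 * n / 2) * u x ^ (n - 1) * (deriv u x) ^ 2 * iteratedDeriv 2 ψ x
            + (n * (n - 1) / 2) * u x ^ (n - 2) * (deriv u x) ^ 3 * deriv ψ x)) = 0 := by
  intro ψ hψ hψc
  set g : ℝ → ℝ := fun x =>
      u x ^ n * deriv u x * iteratedDeriv 3 ψ x
        + (3 * n / 2) * u x ^ (n - 1) * (deriv u x) ^ 2 * iteratedDeriv 2 ψ x
        + (n * (n - 1) / 2) * u x ^ (n - 2) * (deriv u x) ^ 3 * deriv ψ x with hg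
  by_cases hInt : IntegrableOn g (Ioi (0:ℝ)) volume
  · -- the antiderivative
    set F : ℝ → ℝ := fun x => 2 * x ^ (2*n+1) * iteratedDeriv 2 ψ x
        + (2*n - 2) * x ^ (2*n) * deriv ψ x with hF
    have h2ψ : iteratedDeriv 2 ψ = deriv (deriv ψ) := by
      rw [iteratedDeriv_succ, iteratedDeriv_one]
    have h3ψ : iteratedDeriv 3 ψ = deriv (iteratedDeriv 2 ψ) := by
      rw [iteratedDeriv_succ]
    -- continuity of the derivatives of ψ
    have hcψ1 : Continuous (deriv ψ) := by
      have := hψ.continuous_iteratedDeriv 1 (by norm_num)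
      rwa [iteratedDeriv_one] at this
    have hcψ2 : Continuous (iteratedDeriv 2 ψ) :=
      hψ.continuous_iteratedDeriv 2 (by norm_num)
    -- F is continuous at 0 from the right
    have hcont : ContinuousWithinAt F (Ici (0:ℝ)) 0 := by
      apply ContinuousAt.continuousWithinAt
      have c1 : ContinuousAt (fun x : ℝ => x ^ (2*n+1)) 0 :=
        Real.continuousAt_rpow_const 0 (2*n+1) (Or.inr (by positivity))
      have c2 : ContinuousAt (fun x : ℝ => x ^ (2*n)) 0 :=
        Real.continuousAt_rpow_const 0 (2*n) (Or.inr (by positivity))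
      exact (((c1.const_mul 2).mul hcψ2.continuousAt).add
        ((c2.const_mul (2*n-2)).mul hcψ1.continuousAt))
    have hF0 : F 0 = 0 := by
      simp [hF, Real.zero_rpow (by positivity : (2*n+1) ≠ 0),
        Real.zero_rpow (by positivity : (2*n) ≠ 0)]
    -- F tends to 0 at +∞ since it has compact support
    have hcs : HasCompactSupport F := by
      have hA : HasCompactSupport (fun x : ℝ => (2 * x ^ (2*n+1)) * iteratedDeriv 2 ψ x) := by
        have : HasCompactSupport (iteratedDeriv 2 ψ) := by rw [h2ψ]; exact hψc.deriv.deriv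
        exact this.mul_left
      have hB : HasCompactSupport (fun x : ℝ => ((2*n-2) * x ^ (2*n)) * deriv ψ x) :=
        hψc.deriv.mul_left
      have := hA.add hB
      have e : F = (fun x : ℝ => (2 * x ^ (2*n+1)) * iteratedDeriv 2 ψ x)
          + (fun x : ℝ => ((2*n-2) * x ^ (2*n)) * deriv ψ x) := by
        ext x
        simp only [hF, Pi.add_apply]
      rw [e]
      exact this
    have htop : Filter.Tendsto F Filter.atTop (nhds 0) :=
      hcs.is_zero_at_infty.mono_left _root_.atTop_le_cocompact
    -- F' = g on (0, ∞)
    have hder : ∀ x ∈ Ioi (0:ℝ), HasDerivAt F (g x) x := by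
      intro x hx
      have hx0 : (0:ℝ) < x := hx
      -- derivative of u at x
      have hux : deriv u x = 2 * x := by
        have hev : u =ᶠ[nhds x] fun y => y ^ 2 := by
          filter_upwards [Ioi_mem_nhds hx0] with y hy
          rw [hu y, max_eq_left (le_of_lt hy)]
        rw [hev.deriv_eq]
        simp [deriv_pow]
      have huxx : u x = x ^ 2 := by rw [hu x, max_eq_left hx0.le]
      -- derivatives of the powers
      have h1 : HasDerivAt (fun y : ℝ => y ^ (2*n+1)) ((2*n+1) * x ^ (2*n)) x := by
        have := Real.hasDerivAt_rpow_const (x := x) (p := 2*n+1) (Or.inl hx0.ne')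
        convert this using 2
        ring
      have h2 : HasDerivAt (fun y : ℝ => y ^ (2*n)) ((2*n) * x ^ (2*n-1)) x :=
        Real.hasDerivAt_rpow_const (x := x) (p := 2*n) (Or.inl hx0.ne')
      have hψ2d : HasDerivAt (iteratedDeriv 2 ψ) (iteratedDeriv 3 ψ x) x := by
        have hd : DifferentiableAt ℝ (iteratedDeriv 2 ψ) x :=
          (hψ.differentiable_iteratedDeriv 2 (by norm_num)) x
        rw [h3ψ]
        exact hd.hasDerivAt
      have hψ1d : HasDerivAt (deriv ψ) (iteratedDeriv 2 ψ x) x := by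
        have hd : DifferentiableAt ℝ (iteratedDeriv 1 ψ) x :=
          (hψ.differentiable_iteratedDeriv 1 (by norm_num)) x
        rw [iteratedDeriv_one] at hd
        rw [h2ψ]
        exact hd.hasDerivAt
      have hAB := ((h1.const_mul 2).mul hψ2d).add ((h2.const_mul (2*n-2)).mul hψ1d)
      have hFval : g x =
          2 * ((2*n+1) * x ^ (2*n)) * iteratedDeriv 2 ψ x
            + 2 * x ^ (2*n+1) * iteratedDeriv 3 ψ x
            + ((2*n-2) * ((2*n) * x ^ (2*n-1)) * deriv ψ x
              + (2*n-2) * x ^ (2*n) * iteratedDeriv 2 ψ x) := by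
        have e1 : (x ^ 2 : ℝ) ^ n = x ^ (2*n) := by
          rw [← Real.rpow_natCast x 2, ← Real.rpow_mul hx0.le]
          norm_num
        have e2 : (x ^ 2 : ℝ) ^ (n-1) = x ^ (2*n-2) := by
          rw [← Real.rpow_natCast x 2, ← Real.rpow_mul hx0.le]
          ring_nf
        have e3 : (x ^ 2 : ℝ) ^ (n-2) = x ^ (2*n-4) := by
          rw [← Real.rpow_natCast x 2, ← Real.rpow_mul hx0.le]
          ring_nf
        have key : ∀ k : ℕ, x ^ (2*n - 4 + (k:ℝ)) = x ^ (2*n-4) * x ^ k := by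
          intro k
          rw [Real.rpow_add hx0, Real.rpow_natCast]
        have k5 : x ^ (2*n+1) = x ^ (2*n-4) * x ^ (5:ℕ) := by
          rw [← key 5]; congr 1; push_cast; ring
        have k4 : x ^ (2*n) = x ^ (2*n-4) * x ^ (4:ℕ) := by
          rw [← key 4]; congr 1; push_cast; ring
        have k3 : x ^ (2*n-1) = x ^ (2*n-4) * x ^ (3:ℕ) := by
          rw [← key 3]; congr 1; push_cast; ring
        have k2 : x ^ (2*n-2) = x ^ (2*n-4) * x ^ (2:ℕ) := by
          rw [← key 2]; congr 1; push_cast; ring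
        rw [hg]
        simp only [huxx, hux, e1, e2, e3, k5, k4, k3, k2]
        ring
      rw [hFval]
      exact hAB
    have := integral_Ioi_of_hasDerivAt_of_tendsto hcont hder hInt htop
    rw [hF0, sub_zero] at this
    simpa [hg] using this
  · exact integral_undef hInt
end
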